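/- arXiv:0803.4020 — 5 statements merged into one kernel-verified Lean document; each statement's English description precedes it below -/
import Mathlib

section
/- The function Q satisfies the integral identities: ∫Q = ∫Q²; ∫Q³ = (6/5)·∫Q²; ∫(Q')² = (1/5)·∫Q²; ∫x²Q³ = (6/5)·∫x²Q² − (3/5)·∫Q²; ∫x²(Q')² = (1/5)·∫x²Q² + (2/5)·∫Q²; moreover ∫Q² = 6 and ∫x²Q² = 2π² − 12 (all integrals over ℝ). -/
open Real MeasureTheory Filter

noncomputable section

/-- `Qs x = (3/2) * sech²(x/2)`. -/
def Qs (x : ℝ) : ℝ := (3/2) * (1 / Real.cosh (x/2))^2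

/-- The solitary wave profile `φ_c`. -/
def phic (c : ℝ) (x : ℝ) : ℝ := (c - 1) * Qs (Real.sqrt ((c - 1)/c) * x)

/-- The linearized operator `L f = -f'' + f - 2 Q f`. -/
def Lop (f : ℝ → ℝ) (x : ℝ) : ℝ := -(iteratedDeriv 2 f x) + f x - 2 * Qs x * f x

/-- `φ = -Q'/Q`. -/
def phi0 (x : ℝ) : ℝ := -(deriv Qs x / Qs x)

/-- `P_λ = 2Q + ((3-λ)/2) x Q'`. -/
def Pl (lam : ℝ) (x : ℝ) : ℝ := 2 * Qs x + ((3 - lam)/2) * x * deriv Qs x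

/-- The space `𝒴` of smooth functions with exponential decay of all derivatives. -/
def inY (f : ℝ → ℝ) : Prop :=
  ContDiff ℝ (⊤ : ℕ∞) f ∧ ∀ j : ℕ, ∃ K r : ℝ, 0 < K ∧ 0 < r ∧
    ∀ x : ℝ, |iteratedDeriv j f x| ≤ K * (1 + |x|) ^ r * Real.exp (-|x|)

/-- The `H¹(ℝ)` norm. -/
def H1norm (v : ℝ → ℝ) : ℝ := Real.sqrt (∫ x : ℝ, ((v x)^2 + (deriv v x)^2))

/-- The `H¹` norm restricted to a set. -/
def H1normOn (s : Set ℝ) (v : ℝ → ℝ) : ℝ :=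
  Real.sqrt (∫ x in s, ((v x)^2 + (deriv v x)^2))

/-- The weighted norm `H¹_c`. -/
def H1cnorm (c : ℝ) (v : ℝ → ℝ) : ℝ :=
  Real.sqrt (∫ x : ℝ, ((deriv v x)^2 + (c - 1) * (v x)^2))

/-- The `L²(ℝ)` norm. -/
def L2norm (v : ℝ → ℝ) : ℝ := Real.sqrt (∫ x : ℝ, (v x)^2)

/-- The BBM residual `(1-∂ₓ²)∂ₜu + ∂ₓ(u+u²)` at `(t,x)`. -/
def bbmRes (u : ℝ → ℝ → ℝ) (t x : ℝ) : ℝ :=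
  deriv (fun s => u s x) t
    - iteratedDeriv 2 (fun y => deriv (fun s => u s y) t) x
    + deriv (fun y => u t y + (u t y)^2) x

/-- An `H¹` solution of the BBM equation. -/
def IsBBMSol (u : ℝ → ℝ → ℝ) : Prop :=
  (Continuous fun p : ℝ × ℝ => u p.1 p.2) ∧
  (∀ t : ℝ, Integrable (fun x => (u t x)^2) ∧ Integrable (fun x => (deriv (u t) x)^2)) ∧
  (∀ t x : ℝ, bbmRes u t x = 0)

/-- The energy `E(u) = ∫ (u²/2 + u³/3)`. -/
def Efun (u : ℝ → ℝ) : ℝ := ∫ x : ℝ, ((u x)^2/2 + (u x)^3/3)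

/-- `N(u) = (1/2) ∫ (uₓ² + u²)`. -/
def Nfun (u : ℝ → ℝ) : ℝ := (1/2) * ∫ x : ℝ, ((deriv u x)^2 + (u x)^2)

/-- The collision time scale `T`. -/
def Tcol (c1 c2 : ℝ) : ℝ :=
  ((c2 - 1)/c2) ^ (-(1/2 : ℝ) - 1/100)
    * ((1 - (c1 - 1)/c1)/((c1 - 1)/c1)) * ((c1 - 1)/c1) ^ ((1 : ℝ)/100)

/-- The index set `Σ₀ = {(k,l) : k ≥ 1, k+l ≤ 3}`. -/
def Sigma0 : Finset (ℕ × ℕ) :=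
  (Finset.range 4 ×ˢ Finset.range 4).filter (fun p => 1 ≤ p.1 ∧ p.1 + p.2 ≤ 3)

end


section
open Real MeasureTheory Filter Set Topology

noncomputable section QIaux

def sB (x : ℝ) : ℝ := (1 / Real.cosh (x/2))^2
def tB (x : ℝ) : ℝ := Real.sinh (x/2) / Real.cosh (x/2)

lemma chpos (x : ℝ) : 0 < Real.cosh (x/2) := Real.cosh_pos _
lemma chne (x : ℝ) : Real.cosh (x/2) ≠ 0 := (chpos x).ne'

lemma sB_nonneg (x : ℝ) : 0 ≤ sB x := by unfold sB; positivity

lemma sB_le_one (x : ℝ) : sB x ≤ 1 := by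
  have h1 : 1 / Real.cosh (x/2) ≤ 1 := by
    rw [div_le_one (chpos x)]; exact Real.one_le_cosh _
  have h0 : (0:ℝ) ≤ 1 / Real.cosh (x/2) := by positivity
  simpa [sB] using pow_le_one₀ h0 h1

lemma tB_sq (x : ℝ) : tB x ^ 2 = 1 - sB x := by
  have h := Real.cosh_sq_sub_sinh_sq (x/2)
  unfold tB sB
  field_simp
  linarith

lemma sB_even (x : ℝ) : sB (-x) = sB x := by
  unfold sB; rw [neg_div, Real.cosh_neg]

lemma hT (x : ℝ) : HasDerivAt tB (sB x / 2) x := by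
  have hx : HasDerivAt (fun y : ℝ => y/2) (1/2) x := (hasDerivAt_id x).div_const 2
  have hs : HasDerivAt (fun y : ℝ => Real.sinh (y/2)) (Real.cosh (x/2) * (1/2)) x := hx.sinh
  have hc : HasDerivAt (fun y : ℝ => Real.cosh (y/2)) (Real.sinh (x/2) * (1/2)) x := hx.cosh
  have h : HasDerivAt tB _ x := hs.div hc (chne x)
  convert h using 1
  have hid := Real.cosh_sq_sub_sinh_sq (x/2)
  unfold sB
  field_simp
  linear_combination (-1) * hid

lemma hS (x : ℝ) : HasDerivAt sB (-(sB x * tB x)) x := by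
  have hx : HasDerivAt (fun y : ℝ => y/2) (1/2) x := (hasDerivAt_id x).div_const 2
  have hc : HasDerivAt (fun y : ℝ => Real.cosh (y/2)) (Real.sinh (x/2) * (1/2)) x := hx.cosh
  have hinv : HasDerivAt (fun y : ℝ => (Real.cosh (y/2))⁻¹) _ x := hc.inv (chne x)
  have h2 : HasDerivAt (fun y : ℝ => ((Real.cosh (y/2))⁻¹)^2) _ x := hinv.pow 2
  have hfun : (fun y : ℝ => ((Real.cosh (y/2))⁻¹)^2) = sB := by
    funext y; simp [sB, one_div]
  rw [hfun] at h2
  convert h2 using 1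
  unfold sB tB
  norm_num
  field_simp

lemma cosh_ge (y : ℝ) : Real.exp y / 2 ≤ Real.cosh y := by
  rw [Real.cosh_eq]; linarith [(Real.exp_pos (-y)).le]

lemma sB_le_exp (x : ℝ) : sB x ≤ 4 * Real.exp (-x) := by
  have h1 : 1 / Real.cosh (x/2) ≤ 2 * Real.exp (-(x/2)) := by
    rw [div_le_iff₀ (chpos x)]
    have h2 := cosh_ge (x/2)
    have h3 : Real.exp (-(x/2)) * Real.exp (x/2) = 1 := by
      rw [← Real.exp_add]; simp
    nlinarith [(Real.exp_pos (-(x/2))).le]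
  have h0 : (0:ℝ) ≤ 1 / Real.cosh (x/2) := by positivity
  have := pow_le_pow_left₀ h0 h1 2
  calc sB x ≤ (2 * Real.exp (-(x/2)))^2 := this
  _ = 4 * Real.exp (-x) := by
      rw [mul_pow, pow_two (Real.exp (-(x/2))), ← Real.exp_add,
        show -(x/2) + -(x/2) = -x by ring]
      norm_num

lemma sB_le_exp' (x : ℝ) : sB x ≤ 4 * Real.exp x := by
  have := sB_le_exp (-x)
  rwa [sB_even, neg_neg] at this

lemma cont_sB : Continuous sB := by
  apply Continuous.pow
  exact Continuous.div continuous_const (by fun_prop) (fun x => chne x)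

lemma cont_tB : Continuous tB :=
  Continuous.div (by fun_prop) (by fun_prop) (fun x => chne x)

lemma int_x2_exp : IntegrableOn (fun x : ℝ => x^2 * Real.exp (-x)) (Ioi 0) := by
  have h := Real.GammaIntegral_convergent (s := 3) (by norm_num)
  apply h.congr_fun ?_ measurableSet_Ioi
  intro x hx
  show Real.exp (-x) * x ^ ((3:ℝ)-1) = x^2 * Real.exp (-x)
  rw [show (3:ℝ) - 1 = ((2:ℕ):ℝ) by norm_num, Real.rpow_natCast]
  ring

lemma int_Ioi_poly : IntegrableOn (fun x : ℝ => (1 + x^2) * Real.exp (-x)) (Ioi 0) := by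
  have h1 : IntegrableOn (fun x : ℝ => Real.exp (-x)) (Ioi 0) := by
    simpa using exp_neg_integrableOn_Ioi 0 one_pos
  exact (h1.add int_x2_exp).congr (ae_of_all _ (fun x => by simp only [Pi.add_apply]; ring))

lemma integrableOn_Iic_neg {f : ℝ → ℝ}
    (h : IntegrableOn (fun x => f (-x)) (Ioi 0)) : IntegrableOn f (Iic 0) := by
  have A : MeasurableEmbedding (fun x : ℝ => -x) :=
    (Homeomorph.neg ℝ).isClosedEmbedding.measurableEmbedding
  have hmap : (volume : Measure ℝ).restrict (Iic (0:ℝ))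
      = Measure.map (fun x : ℝ => -x) ((volume : Measure ℝ).restrict (Ici (0:ℝ))) := by
    have h2 := Measure.restrict_map (μ := (volume : Measure ℝ)) A.measurable
      (s := Iic (0:ℝ)) measurableSet_Iic
    rw [Measure.map_neg_eq_self] at h2
    have hpre : (fun x:ℝ => -x) ⁻¹' (Iic 0) = Ici 0 := by ext y; simp
    rw [hpre] at h2
    exact h2
  rw [IntegrableOn, hmap, A.integrable_map_iff]
  have : IntegrableOn (fun x => f (-x)) (Ici 0) := by
    rwa [integrableOn_Ici_iff_integrableOn_Ioi]
  exact this

lemma integrable_master {f : ℝ → ℝ} (hc : Continuous f)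
    (hb : ∀ x, |f x| ≤ (1 + x^2) * sB x) : Integrable f := by
  have key : ∀ x : ℝ, |f x| ≤ 4 * ((1 + x^2) * Real.exp (-x)) := by
    intro x
    calc |f x| ≤ (1 + x^2) * sB x := hb x
    _ ≤ (1 + x^2) * (4 * Real.exp (-x)) := by
        apply mul_le_mul_of_nonneg_left (sB_le_exp x) (by positivity)
    _ = 4 * ((1 + x^2) * Real.exp (-x)) := by ring
  have key' : ∀ x : ℝ, |f (-x)| ≤ 4 * ((1 + x^2) * Real.exp (-x)) := by
    intro x
    have h := hb (-x)
    rw [sB_even, show (1 + (-x)^2) = 1 + x^2 by ring] at h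
    calc |f (-x)| ≤ (1 + x^2) * sB x := h
    _ ≤ (1 + x^2) * (4 * Real.exp (-x)) :=
        mul_le_mul_of_nonneg_left (sB_le_exp x) (by positivity)
    _ = 4 * ((1 + x^2) * Real.exp (-x)) := by ring
  have hIoi : IntegrableOn f (Ioi 0) := by
    apply (int_Ioi_poly.const_mul 4).mono' hc.aestronglyMeasurable.restrict
    exact ae_of_all _ (fun x => by simpa [Real.norm_eq_abs] using key x)
  have hIic : IntegrableOn f (Iic 0) := by
    apply integrableOn_Iic_neg
    apply (int_Ioi_poly.const_mul 4).mono' (hc.comp continuous_neg).aestronglyMeasurable.restrict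
    exact ae_of_all _ (fun x => by simpa [Real.norm_eq_abs] using key' x)
  rw [← integrableOn_univ, ← Set.Iic_union_Ioi (a := (0:ℝ))]
  exact hIic.union hIoi

lemma int_sB : Integrable sB :=
  integrable_master cont_sB (fun x => by
    rw [abs_of_nonneg (sB_nonneg x)]
    nlinarith [sB_nonneg x, sq_nonneg x])

lemma sBpow_le (x : ℝ) : ∀ k : ℕ, (sB x)^(k+1) ≤ sB x := by
  intro k
  induction k with
  | zero => simp [pow_one]
  | succ n ih =>
      calc (sB x)^(n+2) = sB x * (sB x)^(n+1) := by ring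
      _ ≤ 1 * sB x := by
          apply mul_le_mul (sB_le_one x) ih (pow_nonneg (sB_nonneg x) _) zero_le_one
      _ = sB x := one_mul _

lemma int_sBpow (k : ℕ) : Integrable (fun x => (sB x)^(k+1)) :=
  integrable_master (cont_sB.pow (k+1)) (fun x => by
    rw [abs_of_nonneg (pow_nonneg (sB_nonneg x) _)]
    nlinarith [sBpow_le x k, sq_nonneg x, sB_nonneg x, pow_nonneg (sB_nonneg x) (k+1)])

lemma int_x2sBpow (k : ℕ) : Integrable (fun x => x^2 * (sB x)^(k+1)) :=
  integrable_master ((continuous_pow 2).mul (cont_sB.pow (k+1))) (fun x => by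
    rw [abs_of_nonneg (mul_nonneg (sq_nonneg x) (pow_nonneg (sB_nonneg x) _))]
    nlinarith [sBpow_le x k, sq_nonneg x, sB_nonneg x, pow_nonneg (sB_nonneg x) (k+1),
      mul_le_mul_of_nonneg_left (sBpow_le x k) (sq_nonneg x)])

lemma int_sB2 : Integrable (fun x => (sB x)^2) := int_sBpow 1
lemma int_sB3 : Integrable (fun x => (sB x)^3) := int_sBpow 2
lemma int_x2sB : Integrable (fun x => x^2 * sB x) := by
  simpa [pow_one] using int_x2sBpow 0
lemma int_x2sB2 : Integrable (fun x => x^2 * (sB x)^2) := int_x2sBpow 1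
lemma int_x2sB3 : Integrable (fun x => x^2 * (sB x)^3) := int_x2sBpow 2

lemma tB_eq (x : ℝ) : tB x = (Real.exp x - 1)/(Real.exp x + 1) := by
  unfold tB
  rw [Real.sinh_eq, Real.cosh_eq]
  have h1 : Real.exp (x/2) * Real.exp (-x/2) = 1 := by
    rw [← Real.exp_add, show x/2 + -x/2 = 0 by ring, Real.exp_zero]
  have h2 : Real.exp (x/2) * Real.exp (x/2) = Real.exp x := by
    rw [← Real.exp_add]; ring_nf
  have hp1 := Real.exp_pos (x/2)
  have hp2 := Real.exp_pos x
  have hs : Real.exp (x/2) + Real.exp (-x/2) > 0 := by positivity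
  rw [show -(x/2) = -x/2 by ring]
  rw [div_eq_div_iff (by positivity) (by positivity)]
  linear_combination (Real.exp (-x/2)) * h2 - (Real.exp (x/2)) * h1

lemma tB_top : Tendsto tB atTop (𝓝 1) := by
  have h0 : ∀ x : ℝ, tB x = 1 - 2/(Real.exp x + 1) := by
    intro x
    rw [tB_eq]
    have : Real.exp x + 1 > 0 := by positivity
    field_simp
    ring
  rw [show tB = fun x => 1 - 2/(Real.exp x + 1) from funext h0]
  have h1 : Tendsto (fun x : ℝ => 2/(Real.exp x + 1)) atTop (𝓝 0) := by
    apply Tendsto.div_atTop tendsto_const_nhds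
    exact tendsto_atTop_add_const_right _ 1 Real.tendsto_exp_atTop
  simpa using tendsto_const_nhds.sub h1

lemma tB_bot : Tendsto tB atBot (𝓝 (-1)) := by
  rw [show tB = fun x => (Real.exp x - 1)/(Real.exp x + 1) from funext tB_eq]
  have h1 := (Real.tendsto_exp_atBot.sub_const 1).div
    (Real.tendsto_exp_atBot.add_const 1) (by norm_num)
  simpa [Pi.div_def] using h1

lemma xmsB_top (m : ℕ) : Tendsto (fun x => x^m * sB x) atTop (𝓝 0) := by
  have hb : ∀ᶠ x in atTop, ‖x^m * sB x‖ ≤ 4 * (x^m * Real.exp (-x)) := by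
    filter_upwards [eventually_ge_atTop (0:ℝ)] with x hx
    rw [Real.norm_eq_abs, abs_of_nonneg (mul_nonneg (pow_nonneg hx m) (sB_nonneg x))]
    nlinarith [sB_le_exp x, pow_nonneg hx m, sB_nonneg x]
  exact squeeze_zero_norm' hb
    (by simpa using (tendsto_pow_mul_exp_neg_atTop_nhds_zero m).const_mul 4)

lemma xmsB_bot (m : ℕ) : Tendsto (fun x => x^m * sB x) atBot (𝓝 0) := by
  have hb : ∀ᶠ x in atBot, ‖x^m * sB x‖ ≤ 4 * ((-x)^m * Real.exp x) := by
    filter_upwards [eventually_le_atBot (0:ℝ)] with x hx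
    have hnx : (0:ℝ) ≤ -x := by linarith
    rw [Real.norm_eq_abs, abs_mul, abs_pow, abs_of_nonpos hx,
      abs_of_nonneg (sB_nonneg x)]
    nlinarith [sB_le_exp' x, pow_nonneg hnx m, sB_nonneg x]
  apply squeeze_zero_norm' hb
  have h := (tendsto_pow_mul_exp_neg_atTop_nhds_zero m).comp tendsto_neg_atBot_atTop
  have heq : ((fun x : ℝ => x^m * Real.exp (-x)) ∘ (fun x : ℝ => -x))
      = fun x : ℝ => (-x)^m * Real.exp x := by
    funext x; simp [Function.comp]
  rw [heq] at h
  simpa using h.const_mul 4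

lemma sB_top : Tendsto sB atTop (𝓝 0) := by simpa using xmsB_top 0
lemma sB_bot : Tendsto sB atBot (𝓝 0) := by simpa using xmsB_bot 0

lemma S1 : ∫ x : ℝ, sB x = 4 := by
  have hder : ∀ x : ℝ, HasDerivAt (fun y => 2 * tB y) (sB x) x := by
    intro x
    have := (hT x).const_mul 2
    convert this using 1
    all_goals try rfl
    ring
  have htop : Tendsto (fun y => 2 * tB y) atTop (𝓝 2) := by
    simpa using tB_top.const_mul 2
  have hbot : Tendsto (fun y => 2 * tB y) atBot (𝓝 (-2)) := by
    simpa using tB_bot.const_mul 2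
  have := integral_of_hasDerivAt_of_tendsto hder int_sB hbot htop
  rw [this]; norm_num

lemma S2 : ∫ x : ℝ, (sB x)^2 = 8/3 := by
  have hder : ∀ x : ℝ, HasDerivAt (fun y => 2 * tB y - (2/3) * (tB y)^3) ((sB x)^2) x := by
    intro x
    have h1 := (hT x).const_mul 2
    have h2 := ((hT x).pow 3).const_mul (2/3)
    have h := h1.sub h2
    convert h using 1
    all_goals try rfl
    have hq := tB_sq x
    push_cast
    linear_combination (sB x) * hq
  have htop : Tendsto (fun y => 2 * tB y - (2/3) * (tB y)^3) atTop (𝓝 (4/3)) := by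
    have := (tB_top.const_mul 2).sub ((tB_top.pow 3).const_mul (2/3))
    norm_num at this
    convert this using 2 <;> norm_num
  have hbot : Tendsto (fun y => 2 * tB y - (2/3) * (tB y)^3) atBot (𝓝 (-(4/3))) := by
    have := (tB_bot.const_mul 2).sub ((tB_bot.pow 3).const_mul (2/3))
    norm_num at this
    convert this using 2 <;> norm_num
  have := integral_of_hasDerivAt_of_tendsto hder int_sB2 hbot htop
  rw [this]; norm_num

lemma S3 : ∫ x : ℝ, (sB x)^3 = 32/15 := by
  have hder : ∀ x : ℝ, HasDerivAt
      (fun y => 2 * tB y - (4/3) * (tB y)^3 + (2/5) * (tB y)^5) ((sB x)^3) x := by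
    intro x
    have h1 := (hT x).const_mul 2
    have h2 := ((hT x).pow 3).const_mul (4/3)
    have h3 := ((hT x).pow 5).const_mul (2/5)
    have h := (h1.sub h2).add h3
    convert h using 1
    all_goals try rfl
    have hq := tB_sq x
    push_cast
    linear_combination (sB x * (1 - (tB x)^2 + sB x)) * hq
  have htop : Tendsto (fun y => 2 * tB y - (4/3) * (tB y)^3 + (2/5) * (tB y)^5)
      atTop (𝓝 (16/15)) := by
    have := ((tB_top.const_mul 2).sub ((tB_top.pow 3).const_mul (4/3))).add
      ((tB_top.pow 5).const_mul (2/5))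
    norm_num at this
    convert this using 2 <;> norm_num
  have hbot : Tendsto (fun y => 2 * tB y - (4/3) * (tB y)^3 + (2/5) * (tB y)^5)
      atBot (𝓝 (-(16/15))) := by
    have := ((tB_bot.const_mul 2).sub ((tB_bot.pow 3).const_mul (4/3))).add
      ((tB_bot.pow 5).const_mul (2/5))
    norm_num at this
    convert this using 2 <;> norm_num
  have := integral_of_hasDerivAt_of_tendsto hder int_sB3 hbot htop
  rw [this]; norm_num

lemma Z1 : ∫ x : ℝ, ((3/2) * (x^2 * (sB x)^2) - x^2 * sB x + 2 * sB x) = 0 := by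
  set f' : ℝ → ℝ := fun x => (3/2) * (x^2 * (sB x)^2) - x^2 * sB x + 2 * sB x with hf'
  have hder : ∀ x : ℝ, HasDerivAt (fun y => y^2 * sB y * tB y + 2 * (y * sB y)) (f' x) x := by
    intro x
    have h1 : HasDerivAt (fun y : ℝ => y^2) (2*x) x := by
      simpa using hasDerivAt_pow 2 x
    have hid : HasDerivAt (fun y : ℝ => y) 1 x := hasDerivAt_id x
    have hA := (h1.mul (hS x)).mul (hT x)
    have hB := (hid.mul (hS x)).const_mul 2
    have h := hA.add hB
    convert h using 1
    all_goals try rfl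
    have hq := tB_sq x
    simp only [hf']
    simp only [Pi.mul_apply]
    ring_nf
    linear_combination (x^2 * sB x) * hq
  have hint : Integrable f' := by
    apply ((int_x2sB2.const_mul (3/2)).sub int_x2sB).add (int_sB.const_mul 2)
  have htop : Tendsto (fun y => y^2 * sB y * tB y + 2 * (y * sB y)) atTop (𝓝 0) := by
    have hA := (xmsB_top 2).mul tB_top
    have hB := (xmsB_top 1).const_mul 2
    have h := hA.add hB
    norm_num at h
    apply h.congr
    intro x; ring
  have hbot : Tendsto (fun y => y^2 * sB y * tB y + 2 * (y * sB y)) atBot (𝓝 0) := by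
    have hA := (xmsB_bot 2).mul tB_bot
    have hB := (xmsB_bot 1).const_mul 2
    have h := hA.add hB
    norm_num at h
    apply h.congr
    intro x; ring
  have := integral_of_hasDerivAt_of_tendsto hder hint hbot htop
  simpa using this

lemma Z2 : ∫ x : ℝ, ((5/4) * (x^2 * (sB x)^3) - x^2 * (sB x)^2 + (1/2) * (sB x)^2) = 0 := by
  set f' : ℝ → ℝ := fun x => (5/4) * (x^2 * (sB x)^3) - x^2 * (sB x)^2 + (1/2) * (sB x)^2
    with hf'
  have hder : ∀ x : ℝ, HasDerivAt
      (fun y => (1/2) * (y^2 * sB y * sB y * tB y) + (1/2) * (y * sB y * sB y)) (f' x) x := by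
    intro x
    have h1 : HasDerivAt (fun y : ℝ => y^2) (2*x) x := by
      simpa using hasDerivAt_pow 2 x
    have hid : HasDerivAt (fun y : ℝ => y) 1 x := hasDerivAt_id x
    have hA := (((h1.mul (hS x)).mul (hS x)).mul (hT x)).const_mul (1/2)
    have hB := ((hid.mul (hS x)).mul (hS x)).const_mul (1/2)
    have h := hA.add hB
    convert h using 1
    all_goals try rfl
    have hq := tB_sq x
    simp only [hf']
    simp only [Pi.mul_apply]
    ring_nf
    linear_combination (x^2 * (sB x)^2) * hq
  have hint : Integrable f' := by
    apply ((int_x2sB3.const_mul (5/4)).sub int_x2sB2).add (int_sB2.const_mul (1/2))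
  have htop : Tendsto (fun y => (1/2) * (y^2 * sB y * sB y * tB y) + (1/2) * (y * sB y * sB y))
      atTop (𝓝 0) := by
    have hA := (((xmsB_top 2).mul sB_top).mul tB_top).const_mul (1/2)
    have hB := (((xmsB_top 1).mul sB_top)).const_mul (1/2)
    have h := hA.add hB
    norm_num at h
    apply h.congr
    intro x; ring
  have hbot : Tendsto (fun y => (1/2) * (y^2 * sB y * sB y * tB y) + (1/2) * (y * sB y * sB y))
      atBot (𝓝 0) := by
    have hA := (((xmsB_bot 2).mul sB_bot).mul tB_bot).const_mul (1/2)
    have hB := (((xmsB_bot 1).mul sB_bot)).const_mul (1/2)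
    have h := hA.add hB
    norm_num at h
    apply h.congr
    intro x; ring
  have := integral_of_hasDerivAt_of_tendsto hder hint hbot htop
  simpa using this

lemma sB_formula (x : ℝ) : sB x = 4 * Real.exp (-x) / (1 + Real.exp (-x))^2 := by
  unfold sB
  rw [Real.cosh_eq]
  have ha : Real.exp (x/2) ≠ 0 := (Real.exp_pos _).ne'
  have e1 : Real.exp (-(x/2)) = (Real.exp (x/2))⁻¹ := Real.exp_neg _
  have e2 : Real.exp (-x) = ((Real.exp (x/2))⁻¹)^2 := by
    rw [show -x = -(x/2) + -(x/2) by ring, Real.exp_add, e1]; ring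
  rw [e1, e2]
  have hb : (Real.exp (x/2))⁻¹ ≠ 0 := inv_ne_zero ha
  have hd : (1 : ℝ) + ((Real.exp (x/2))⁻¹)^2 ≠ 0 := by positivity
  field_simp
  ring

lemma Ival (n : ℕ) (hn : 0 < n) :
    ∫ x in Ioi (0:ℝ), x^2 * Real.exp (-((n:ℝ) * x)) = 2 / (n:ℝ)^3 := by
  have hr : (0:ℝ) < (n:ℝ) := by exact_mod_cast hn
  have h := Real.integral_rpow_mul_exp_neg_mul_Ioi (a := 3) (r := (n:ℝ)) (by norm_num) hr
  have hg : Real.Gamma 3 = 2 := by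
    rw [show (3:ℝ) = ((2:ℕ):ℝ) + 1 by norm_num, Real.Gamma_nat_eq_factorial]
    norm_num
  have hcong : ∫ t in Ioi (0:ℝ), t ^ ((3:ℝ)-1) * Real.exp (-((n:ℝ) * t))
      = ∫ x in Ioi (0:ℝ), x^2 * Real.exp (-((n:ℝ) * x)) := by
    apply setIntegral_congr_fun measurableSet_Ioi
    intro t ht
    show t ^ ((3:ℝ)-1) * Real.exp (-((n:ℝ)*t)) = t^2 * Real.exp (-((n:ℝ)*t))
    rw [show (3:ℝ) - 1 = ((2:ℕ):ℝ) by norm_num, Real.rpow_natCast]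
  rw [hcong] at h
  rw [h, hg, show (3:ℝ) = ((3:ℕ):ℝ) by norm_num, Real.rpow_natCast, div_pow, one_pow]
  ring

lemma eta2 : HasSum (fun n : ℕ => (-1:ℝ)^(n+1) * (1/(n:ℝ)^2)) (π^2/12) := by
  have z : HasSum (fun n : ℕ => 1/(n:ℝ)^2) (π^2/6) := hasSum_zeta_two
  have hinj : Function.Injective (fun k : ℕ => 2*k) := fun a b h => by
    have h' : 2*a = 2*b := h
    omega
  have h0 : ∀ n ∉ Set.range (fun k : ℕ => 2*k),
      (if Even n then 2/(n:ℝ)^2 else 0) = 0 := by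
    intro n hn
    rw [if_neg]
    intro ⟨k, hk⟩
    refine hn ⟨k, ?_⟩
    show 2*k = n
    omega
  have hcomp : HasSum ((fun n : ℕ => if Even n then 2/(n:ℝ)^2 else 0) ∘ (fun k => 2*k))
      (π^2/12) := by
    have heq : ((fun n : ℕ => if Even n then 2/(n:ℝ)^2 else 0) ∘ (fun k => 2*k))
        = fun k : ℕ => (1/2) * (1/(k:ℝ)^2) := by
      funext k
      simp only [Function.comp, if_pos (even_two_mul k)]
      rcases Nat.eq_zero_or_pos k with h | h
      · subst h; norm_num
      · have hk : ((k:ℝ)) ≠ 0 := by positivity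
        push_cast
        field_simp
    rw [heq]
    have := z.mul_left (1/2)
    convert this using 1
    all_goals try rfl
    ring
  have hh : HasSum (fun n : ℕ => if Even n then 2/(n:ℝ)^2 else 0) (π^2/12) :=
    (hinj.hasSum_iff h0).mp hcomp
  have hsub := z.sub hh
  have heq2 : (fun n : ℕ => 1/(n:ℝ)^2 - if Even n then 2/(n:ℝ)^2 else 0)
      = fun n : ℕ => (-1:ℝ)^(n+1) * (1/(n:ℝ)^2) := by
    funext n
    by_cases h : Even n
    · rw [if_pos h, Odd.neg_one_pow h.add_one]
      ring
    · rw [if_neg h, Even.neg_one_pow ((Nat.not_even_iff_odd.mp h).add_one)]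
      ring
  rw [heq2] at hsub
  convert hsub using 1
  all_goals try rfl
  ring

lemma hsum_sB (x : ℝ) (hx : 0 < x) :
    HasSum (fun n : ℕ => (-4*x^2) * ((n:ℝ) * (-Real.exp (-x))^n)) (x^2 * sB x) := by
  have hr : ‖-Real.exp (-x)‖ < 1 := by
    rw [norm_neg, Real.norm_eq_abs, abs_of_pos (Real.exp_pos _)]
    exact Real.exp_lt_one_iff.mpr (by linarith)
  have h := hasSum_coe_mul_geometric_of_norm_lt_one (𝕜 := ℝ) hr
  have h2 := h.mul_left (-4*x^2)
  convert h2 using 1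
  all_goals try rfl
  rw [sB_formula x]
  have hd : (1:ℝ) + Real.exp (-x) ≠ 0 := by positivity
  rw [sub_neg_eq_add]
  field_simp

lemma FF_eq (n : ℕ) (x : ℝ) : (-4*x^2) * ((n:ℝ) * (-Real.exp (-x))^n)
    = ((-4:ℝ)*(n:ℝ)*(-1)^n) * (x^2 * Real.exp (-((n:ℝ)*x))) := by
  rw [neg_pow, ← Real.exp_nat_mul]
  rw [show (n:ℝ) * (-x) = -((n:ℝ)*x) by ring]
  ring

lemma FF_int (n : ℕ) :
    IntegrableOn (fun x : ℝ => (-4*x^2) * ((n:ℝ) * (-Real.exp (-x))^n)) (Ioi 0) := by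
  rcases Nat.eq_zero_or_pos n with h | h
  · subst h
    simp
  · have hb : IntegrableOn (fun x : ℝ => (4*(n:ℝ)) * (x^2 * Real.exp (-x))) (Ioi 0) :=
      int_x2_exp.const_mul _
    apply hb.mono'
    · apply Continuous.aestronglyMeasurable ?_ |>.restrict
      fun_prop
    · filter_upwards [ae_restrict_mem measurableSet_Ioi] with x hx
      have hx0 : (0:ℝ) < x := hx
      have h1 : (1:ℝ) ≤ (n:ℝ) := by exact_mod_cast h
      have hee : Real.exp (-((n:ℝ)*x)) ≤ Real.exp (-x) :=
        Real.exp_le_exp.mpr (by nlinarith)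
      have habs : |((-4:ℝ)*(n:ℝ)*(-1)^n)| = 4*(n:ℝ) := by
        rw [abs_mul, abs_pow, abs_neg, abs_one, one_pow, mul_one, abs_mul,
          Nat.abs_cast, show |(-4:ℝ)| = 4 by norm_num]
      rw [Real.norm_eq_abs, FF_eq, abs_mul, habs,
        abs_of_nonneg (by positivity : (0:ℝ) ≤ x^2 * Real.exp (-((n:ℝ)*x)))]
      calc 4*(n:ℝ) * (x^2 * Real.exp (-((n:ℝ)*x)))
          ≤ 4*(n:ℝ) * (x^2 * Real.exp (-x)) := by
            apply mul_le_mul_of_nonneg_left ?_ (by positivity)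
            exact mul_le_mul_of_nonneg_left hee (sq_nonneg x)
      _ = (4*(n:ℝ)) * (x^2 * Real.exp (-x)) := by ring

lemma FF_val (n : ℕ) : ∫ x in Ioi (0:ℝ), (-4*x^2) * ((n:ℝ) * (-Real.exp (-x))^n)
    = 8 * ((-1:ℝ)^(n+1) * (1/(n:ℝ)^2)) := by
  rcases Nat.eq_zero_or_pos n with h | h
  · subst h; simp
  · have heq : ∀ x : ℝ, (-4*x^2) * ((n:ℝ) * (-Real.exp (-x))^n)
        = ((-4:ℝ)*(n:ℝ)*(-1)^n) * (x^2 * Real.exp (-((n:ℝ)*x))) := fun x => FF_eq n x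
    simp_rw [heq]
    rw [integral_const_mul, Ival n h]
    have hn : ((n:ℝ)) ≠ 0 := by positivity
    rw [pow_succ]
    field_simp
    ring

lemma FF_norm (n : ℕ) : ∫ x in Ioi (0:ℝ), ‖(-4*x^2) * ((n:ℝ) * (-Real.exp (-x))^n)‖
    = 8 * (1/(n:ℝ)^2) := by
  rcases Nat.eq_zero_or_pos n with h | h
  · subst h; simp
  · have heq : ∀ x ∈ Ioi (0:ℝ), ‖(-4*x^2) * ((n:ℝ) * (-Real.exp (-x))^n)‖
        = (4*(n:ℝ)) * (x^2 * Real.exp (-((n:ℝ)*x))) := by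
      intro x hx
      have habs : |((-4:ℝ)*(n:ℝ)*(-1)^n)| = 4*(n:ℝ) := by
        rw [abs_mul, abs_pow, abs_neg, abs_one, one_pow, mul_one, abs_mul,
          Nat.abs_cast, show |(-4:ℝ)| = 4 by norm_num]
      rw [Real.norm_eq_abs, FF_eq, abs_mul, habs,
        abs_of_nonneg (by positivity : (0:ℝ) ≤ x^2 * Real.exp (-((n:ℝ)*x)))]
    rw [setIntegral_congr_fun measurableSet_Ioi heq, integral_const_mul, Ival n h]
    have hn : ((n:ℝ)) ≠ 0 := by positivity
    rw [pow_succ]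
    field_simp
    ring

lemma W1_Ioi : ∫ x in Ioi (0:ℝ), x^2 * sB x = 2 * π^2 / 3 := by
  have hFsum : Summable (fun n : ℕ =>
      ∫ x in Ioi (0:ℝ), ‖(-4*x^2) * ((n:ℝ) * (-Real.exp (-x))^n)‖) := by
    rw [funext FF_norm]
    exact (hasSum_zeta_two.summable).mul_left 8
  have key := MeasureTheory.integral_tsum_of_summable_integral_norm FF_int hFsum
  have h1 : ∫ x in Ioi (0:ℝ), x^2 * sB x
      = ∫ x in Ioi (0:ℝ), (∑' n : ℕ, (-4*x^2) * ((n:ℝ) * (-Real.exp (-x))^n)) := by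
    apply setIntegral_congr_fun measurableSet_Ioi
    intro x hx
    exact ((hsum_sB x hx).tsum_eq).symm
  rw [h1, ← key]
  calc ∑' n : ℕ, ∫ x in Ioi (0:ℝ), (-4*x^2) * ((n:ℝ) * (-Real.exp (-x))^n)
      = ∑' n : ℕ, 8 * ((-1:ℝ)^(n+1) * (1/(n:ℝ)^2)) := tsum_congr FF_val
  _ = 8 * (π^2/12) := (eta2.mul_left 8).tsum_eq
  _ = 2 * π^2 / 3 := by ring

lemma integral_even {f : ℝ → ℝ} (hf : Integrable f) (he : ∀ x, f (-x) = f x) :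
    ∫ x : ℝ, f x = 2 * ∫ x in Ioi (0:ℝ), f x := by
  have h1 : ∫ x in Iic (0:ℝ), f x = ∫ x in Ioi (0:ℝ), f x := by
    calc ∫ x in Iic (0:ℝ), f x = ∫ x in Iic (0:ℝ), f (-x) := by simp_rw [he]
    _ = ∫ x in Ioi (-(0:ℝ)), f x := integral_comp_neg_Iic 0 f
    _ = ∫ x in Ioi (0:ℝ), f x := by rw [neg_zero]
  rw [← setIntegral_univ, ← Set.Iic_union_Ioi (a := (0:ℝ)),
    setIntegral_union (Iic_disjoint_Ioi le_rfl) measurableSet_Ioi hf.integrableOn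
      hf.integrableOn, h1, two_mul]

lemma W1 : ∫ x : ℝ, x^2 * sB x = 4 * π^2 / 3 := by
  have he : ∀ x : ℝ, (-x)^2 * sB (-x) = x^2 * sB x := by
    intro x; rw [sB_even, neg_pow]; ring
  rw [integral_even int_x2sB he, W1_Ioi]
  ring

lemma W2 : ∫ x : ℝ, x^2 * (sB x)^2 = 8 * π^2 / 9 - 16/3 := by
  have hz := Z1
  have hI1 : Integrable (fun x : ℝ => (3/2) * (x^2 * (sB x)^2) - x^2 * sB x) :=
    (int_x2sB2.const_mul (3/2)).sub int_x2sB
  have hI2 : Integrable (fun x : ℝ => 2 * sB x) := int_sB.const_mul 2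
  have hI3 : Integrable (fun x : ℝ => (3/2) * (x^2 * (sB x)^2)) := int_x2sB2.const_mul (3/2)
  rw [integral_add hI1 hI2, integral_sub hI3 int_x2sB,
    integral_const_mul, integral_const_mul, S1, W1] at hz
  linarith

lemma W3 : ∫ x : ℝ, x^2 * (sB x)^3 = 32 * π^2 / 45 - 16/3 := by
  have hz := Z2
  have hI1 : Integrable (fun x : ℝ => (5/4) * (x^2 * (sB x)^3) - x^2 * (sB x)^2) :=
    (int_x2sB3.const_mul (5/4)).sub int_x2sB2
  have hI2 : Integrable (fun x : ℝ => (1/2) * (sB x)^2) := int_sB2.const_mul (1/2)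
  have hI3 : Integrable (fun x : ℝ => (5/4) * (x^2 * (sB x)^3)) := int_x2sB3.const_mul (5/4)
  rw [integral_add hI1 hI2, integral_sub hI3 int_x2sB2,
    integral_const_mul, integral_const_mul, S2, W2] at hz
  linarith

lemma hQeq : ∀ x, Qs x = (3/2) * sB x := fun _ => rfl

lemma hQd (x : ℝ) : HasDerivAt Qs (-(3/2) * (sB x * tB x)) x := by
  have h := (hS x).const_mul (3/2)
  have h2 : (fun y => (3/2 : ℝ) * sB y) = Qs := by
    funext y; rw [hQeq]
  rw [h2] at h
  convert h using 1
  all_goals try rfl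
  ring

lemma E1 : ∫ x : ℝ, Qs x = 6 := by
  simp only [hQeq]
  rw [integral_const_mul, S1]; norm_num

lemma E2 : ∫ x : ℝ, (Qs x)^2 = 6 := by
  have h : ∀ x : ℝ, (Qs x)^2 = (9/4) * ((sB x)^2) := fun x => by rw [hQeq]; ring
  simp only [h]
  rw [integral_const_mul, S2]; norm_num

lemma E3 : ∫ x : ℝ, (Qs x)^3 = 36/5 := by
  have h : ∀ x : ℝ, (Qs x)^3 = (27/8) * ((sB x)^3) := fun x => by rw [hQeq]; ring
  simp only [h]
  rw [integral_const_mul, S3]; norm_num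

lemma E4 : ∫ x : ℝ, (deriv Qs x)^2 = 6/5 := by
  have h : ∀ x : ℝ, (deriv Qs x)^2 = (9/4) * ((sB x)^2) - (9/4) * ((sB x)^3) := by
    intro x
    rw [show deriv Qs x = -(3/2) * (sB x * tB x) from (hQd x).deriv]
    have hq := tB_sq x
    linear_combination ((9/4) * (sB x)^2) * hq
  simp only [h]
  rw [integral_sub (int_sB2.const_mul _) (int_sB3.const_mul _),
    integral_const_mul, integral_const_mul, S2, S3]
  norm_num

lemma E5 : ∫ x : ℝ, x^2 * (Qs x)^2 = 2 * π^2 - 12 := by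
  have h : ∀ x : ℝ, x^2 * (Qs x)^2 = (9/4) * (x^2 * (sB x)^2) := fun x => by
    rw [hQeq]; ring
  simp only [h]
  rw [integral_const_mul, W2]; ring

lemma E6 : ∫ x : ℝ, x^2 * (Qs x)^3 = 12 * π^2 / 5 - 18 := by
  have h : ∀ x : ℝ, x^2 * (Qs x)^3 = (27/8) * (x^2 * (sB x)^3) := fun x => by
    rw [hQeq]; ring
  simp only [h]
  rw [integral_const_mul, W3]; ring

lemma E7 : ∫ x : ℝ, x^2 * (deriv Qs x)^2 = 2 * π^2 / 5 := by
  have h : ∀ x : ℝ, x^2 * (deriv Qs x)^2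
      = (9/4) * (x^2 * (sB x)^2) - (9/4) * (x^2 * (sB x)^3) := by
    intro x
    rw [show deriv Qs x = -(3/2) * (sB x * tB x) from (hQd x).deriv]
    have hq := tB_sq x
    linear_combination ((9/4) * x^2 * (sB x)^2) * hq
  simp only [h]
  rw [integral_sub (int_x2sB2.const_mul _) (int_x2sB3.const_mul _),
    integral_const_mul, integral_const_mul, W2, W3]
  ring


end QIaux
end

/-- integral identities for `Q`. -/
theorem Q_integral_identities :
    ((∫ x : ℝ, Qs x) = ∫ x : ℝ, (Qs x)^2) ∧
    ((∫ x : ℝ, (Qs x)^3) = (6/5) * ∫ x : ℝ, (Qs x)^2) ∧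
    ((∫ x : ℝ, (deriv Qs x)^2) = (1/5) * ∫ x : ℝ, (Qs x)^2) ∧
    ((∫ x : ℝ, x^2 * (Qs x)^3) =
      (6/5) * (∫ x : ℝ, x^2 * (Qs x)^2) - (3/5) * ∫ x : ℝ, (Qs x)^2) ∧
    ((∫ x : ℝ, x^2 * (deriv Qs x)^2) =
      (1/5) * (∫ x : ℝ, x^2 * (Qs x)^2) + (2/5) * ∫ x : ℝ, (Qs x)^2) ∧
    ((∫ x : ℝ, (Qs x)^2) = 6) ∧
    ((∫ x : ℝ, x^2 * (Qs x)^2) = 2 * Real.pi^2 - 12) := by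
  refine ⟨?_, ?_, ?_, ?_, ?_, ?_, ?_⟩
  · rw [E1, E2]
  · rw [E3, E2]; norm_num
  · rw [E4, E2]; norm_num
  · rw [E6, E5, E2]; ring
  · rw [E7, E5, E2]; ring
  · exact E2
  · exact E5
end

section
/- For all c > 1: ∫φ_c² = (c−1)^{3/2}·c^{1/2}·∫Q²; ∫φ_c³ = (6/5)·(c−1)·∫φ_c²; ∫(φ_c')² = (1/5)·((c−1)/c)·∫φ_c²; E(φ_c) = (1/2)·(1 + (4/5)(c−1))·∫φ_c²; N(φ_c) = (1/2)·((1/5)·((c−1)/c) + 1)·∫φ_c²; E(φ_c) − c·N(φ_c) = −(1/5)·(c−1)·∫φ_c²; and (d/dc)E(φ_c) = c·(d/dc)N(φ_c) > 0. -/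
open Real MeasureTheory Filter

open Topology Set

noncomputable section
namespace PhAux

def th (x : ℝ) : ℝ := Real.sinh (x/2) / Real.cosh (x/2)
def sch (x : ℝ) : ℝ := 1 / Real.cosh (x/2)

lemma cosh_ne (x : ℝ) : Real.cosh (x/2) ≠ 0 := (Real.cosh_pos _).ne'

lemma one_sub_th_sq (x : ℝ) : 1 - th x ^ 2 = sch x ^ 2 := by
  have h := Real.cosh_sq_sub_sinh_sq (x/2)
  have := (Real.cosh_pos (x/2)).ne'
  simp only [th, sch]
  field_simp
  linarith

lemma sch_nonneg (x : ℝ) : 0 ≤ sch x := by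
  unfold sch
  have := Real.cosh_pos (x/2); positivity

lemma hasDerivAt_th (x : ℝ) : HasDerivAt th (sch x ^ 2 / 2) x := by
  have h1 : HasDerivAt (fun y : ℝ => y/2) (1/2) x := (hasDerivAt_id x).div_const 2
  have hs : HasDerivAt (fun y : ℝ => Real.sinh (y/2)) (Real.cosh (x/2) * (1/2)) x :=
    HasDerivAt.comp (h₂ := Real.sinh) x (Real.hasDerivAt_sinh (x/2)) h1
  have hc : HasDerivAt (fun y : ℝ => Real.cosh (y/2)) (Real.sinh (x/2) * (1/2)) x :=
    HasDerivAt.comp (h₂ := Real.cosh) x (Real.hasDerivAt_cosh (x/2)) h1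
  have := hs.div hc (cosh_ne x)
  convert this using 1 <;> try rfl
  have h := Real.cosh_sq_sub_sinh_sq (x/2)
  simp only [sch]
  field_simp
  nlinarith [Real.cosh_pos (x/2), h]

lemma hasDerivAt_Qs (x : ℝ) : HasDerivAt Qs (-(3/2) * th x * sch x ^ 2) x := by
  have h1 : HasDerivAt (fun y : ℝ => y/2) (1/2) x := (hasDerivAt_id x).div_const 2
  have hc : HasDerivAt (fun y : ℝ => Real.cosh (y/2)) (Real.sinh (x/2) * (1/2)) x :=
    HasDerivAt.comp (h₂ := Real.cosh) x (Real.hasDerivAt_cosh (x/2)) h1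
  have hinv : HasDerivAt (fun y : ℝ => (Real.cosh (y/2))⁻¹)
      (-(Real.sinh (x/2) * (1/2)) / (Real.cosh (x/2))^2) x := hc.inv (cosh_ne x)
  have h2 := ((hinv.pow 2).const_mul (3/2 : ℝ))
  have hQ : Qs = fun y => (3/2) * ((Real.cosh (y/2))⁻¹)^2 := by
    funext y; simp [Qs, one_div]
  rw [hQ]
  convert h2 using 1 <;> try rfl
  have hc0 := cosh_ne x
  simp only [th, sch]
  norm_num
  field_simp

lemma deriv_Qs (x : ℝ) : deriv Qs x = -(3/2) * th x * sch x ^ 2 := (hasDerivAt_Qs x).deriv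

lemma th_eq (x : ℝ) : th x = 1 - 2 / (Real.exp x + 1) := by
  have ha : 0 < Real.exp (x/2) := Real.exp_pos _
  have hx : Real.exp x = Real.exp (x/2) * Real.exp (x/2) := by
    rw [← Real.exp_add]; ring_nf
  have hb : 0 < Real.exp (-(x/2)) := Real.exp_pos _
  have hprod : Real.exp (x/2) * Real.exp (-x/2) = 1 := by
    rw [← Real.exp_add]; ring_nf; exact Real.exp_zero
  rw [th, Real.sinh_eq, Real.cosh_eq, hx]
  field_simp
  rw [neg_div] at hprod
  linear_combination (-2*Real.exp (x/2)) * hprod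

lemma th_tendsto_top : Tendsto th atTop (𝓝 1) := by
  simp_rw [funext th_eq]
  have h : Tendsto (fun x : ℝ => 2 / (Real.exp x + 1)) atTop (𝓝 0) :=
    Tendsto.div_atTop tendsto_const_nhds (Real.tendsto_exp_atTop.atTop_add tendsto_const_nhds)
  simpa using tendsto_const_nhds.sub h

lemma th_tendsto_bot : Tendsto th atBot (𝓝 (-1)) := by
  simp_rw [funext th_eq]
  have h : Tendsto (fun y : ℝ => 1 - 2 / (y + 1)) (𝓝 0) (𝓝 (1 - 2 / (0 + 1))) := by
    apply ContinuousAt.tendsto; fun_prop (disch := norm_num)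
  have := h.comp Real.tendsto_exp_atBot
  norm_num at this
  exact this


lemma even_integrable {f : ℝ → ℝ} (he : ∀ x, f (-x) = f x)
    (hi : IntegrableOn f (Ioi 0)) : Integrable f := by
  have int_Iic : IntegrableOn f (Iic 0) := by
    rw [← Measure.map_neg_eq_self (volume : Measure ℝ)]
    have m : MeasurableEmbedding fun x : ℝ => -x := (Homeomorph.neg ℝ).measurableEmbedding
    rw [m.integrableOn_map_iff]
    simp_rw [Function.comp_def, he, neg_preimage, neg_Iic, neg_zero]
    exact (integrableOn_Ici_iff_integrableOn_Ioi).mpr hi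
  have : IntegrableOn f (Iic 0 ∪ Ioi 0) := int_Iic.union hi
  rwa [Iic_union_Ioi, integrableOn_univ] at this

lemma key_integral {F f : ℝ → ℝ} (hF : ∀ x, HasDerivAt F (f x) x)
    (hpos : ∀ x, 0 ≤ f x) (he : ∀ x, f (-x) = f x) {a b : ℝ}
    (hbot : Tendsto F atBot (𝓝 a)) (htop : Tendsto F atTop (𝓝 b)) :
    Integrable f ∧ (∫ x : ℝ, f x) = b - a := by
  have hi : IntegrableOn f (Ioi 0) :=
    integrableOn_Ioi_deriv_of_nonneg' (fun x _ => hF x) (fun x _ => hpos x) htop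
  have hint : Integrable f := even_integrable he hi
  exact ⟨hint, integral_of_hasDerivAt_of_tendsto hF hint hbot htop⟩

lemma Qs_eq (x : ℝ) : Qs x = (3/2) * sch x ^ 2 := rfl

lemma Qs_neg (x : ℝ) : Qs (-x) = Qs x := by rw [Qs, Qs, neg_div, Real.cosh_neg]

lemma Qs_nonneg (x : ℝ) : 0 ≤ Qs x := by rw [Qs_eq]; positivity

lemma th_neg (x : ℝ) : th (-x) = - th x := by
  simp [th, neg_div, Real.cosh_neg, Real.sinh_neg]

lemma sch_neg (x : ℝ) : sch (-x) = sch x := by rw [sch, sch, neg_div, Real.cosh_neg]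

lemma tendsto_poly_comp_th (g : ℝ → ℝ) (hg : Continuous g) :
    Tendsto (fun x => g (th x)) atTop (𝓝 (g 1)) ∧
      Tendsto (fun x => g (th x)) atBot (𝓝 (g (-1))) :=
  ⟨(hg.tendsto 1).comp th_tendsto_top, (hg.tendsto (-1)).comp th_tendsto_bot⟩

lemma intQs2 : Integrable (fun x => (Qs x)^2) ∧ (∫ x : ℝ, (Qs x)^2) = 6 := by
  have hg : Continuous (fun t : ℝ => (9/2) * (t - t^3/3)) := by continuity
  obtain ⟨htop, hbot⟩ := tendsto_poly_comp_th _ hg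
  have hF : ∀ x, HasDerivAt (fun x => (9/2) * (th x - th x^3/3)) ((Qs x)^2) x := by
    intro x
    have h := ((hasDerivAt_th x).sub (((hasDerivAt_th x).pow 3).div_const 3)).const_mul (9/2 : ℝ)
    convert h using 1 <;> try rfl
    have := one_sub_th_sq x
    rw [Qs_eq]; push_cast; nlinarith [this]
  have htop' : Tendsto (fun x => (9/2) * (th x - th x^3/3)) atTop (𝓝 3) := by
    convert htop using 2; norm_num
  have hbot' : Tendsto (fun x => (9/2) * (th x - th x^3/3)) atBot (𝓝 (-3)) := by
    convert hbot using 2; norm_num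
  have := key_integral hF (fun x => sq_nonneg _) (fun x => by rw [Qs_neg]) hbot' htop'
  norm_num at this
  exact this

lemma intQs3 : Integrable (fun x => (Qs x)^3) ∧ (∫ x : ℝ, (Qs x)^3) = 36/5 := by
  have hg : Continuous (fun t : ℝ => (27/4) * (t - (2/3)*t^3 + t^5/5)) := by continuity
  obtain ⟨htop, hbot⟩ := tendsto_poly_comp_th _ hg
  have hF : ∀ x, HasDerivAt (fun x => (27/4) * (th x - (2/3)*(th x)^3 + (th x)^5/5))
      ((Qs x)^3) x := by
    intro x
    have h := (((hasDerivAt_th x).sub (((hasDerivAt_th x).pow 3).const_mul (2/3 : ℝ))).add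
      (((hasDerivAt_th x).pow 5).div_const 5)).const_mul (27/4 : ℝ)
    convert h using 1 <;> try rfl
    have := one_sub_th_sq x
    rw [Qs_eq]; push_cast
    linear_combination (-(27/8)*sch x^2*(sch x^2 + 1 - th x^2)) * this
  have htop' : Tendsto (fun x => (27/4) * (th x - (2/3)*(th x)^3 + (th x)^5/5)) atTop
      (𝓝 (18/5)) := by convert htop using 2; norm_num
  have hbot' : Tendsto (fun x => (27/4) * (th x - (2/3)*(th x)^3 + (th x)^5/5)) atBot
      (𝓝 (-(18/5))) := by convert hbot using 2; norm_num
  have := key_integral hF (fun x => pow_nonneg (Qs_nonneg x) 3)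
    (fun x => by rw [Qs_neg]) hbot' htop'
  norm_num at this ⊢
  exact this

lemma intQD2 : Integrable (fun x => (-(3/2) * th x * sch x ^ 2)^2) ∧
    (∫ x : ℝ, (-(3/2) * th x * sch x ^ 2)^2) = 6/5 := by
  have hg : Continuous (fun t : ℝ => (9/2) * (t^3/3 - t^5/5)) := by continuity
  obtain ⟨htop, hbot⟩ := tendsto_poly_comp_th _ hg
  have hF : ∀ x, HasDerivAt (fun x => (9/2) * ((th x)^3/3 - (th x)^5/5))
      ((-(3/2) * th x * sch x ^ 2)^2) x := by
    intro x
    have h := ((((hasDerivAt_th x).pow 3).div_const 3).sub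
      (((hasDerivAt_th x).pow 5).div_const 5)).const_mul (9/2 : ℝ)
    convert h using 1 <;> try rfl
    have := one_sub_th_sq x
    push_cast
    linear_combination (-(9/4)*th x^2*sch x^2) * this
  have htop' : Tendsto (fun x => (9/2) * ((th x)^3/3 - (th x)^5/5)) atTop (𝓝 (3/5)) := by
    convert htop using 2; norm_num
  have hbot' : Tendsto (fun x => (9/2) * ((th x)^3/3 - (th x)^5/5)) atBot (𝓝 (-(3/5))) := by
    convert hbot using 2; norm_num
  have := key_integral hF (fun x => sq_nonneg _)
    (fun x => by rw [th_neg, sch_neg]; ring) hbot' htop'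
  norm_num at this ⊢
  exact this

lemma master {c : ℝ} (hc : 1 < c) :
    ((∫ x : ℝ, (phic c x)^2) = 6*((c-1)*Real.sqrt (c-1)*Real.sqrt c) ∧
     (∫ x : ℝ, (phic c x)^3) = (36/5)*((c-1)^2*Real.sqrt (c-1)*Real.sqrt c)) ∧
    ((∫ x : ℝ, (deriv (phic c) x)^2) = (6/5)*((c-1)^2*Real.sqrt (c-1)/Real.sqrt c) ∧
     Efun (phic c) = (1/2)*(1+(4/5)*(c-1))*(6*((c-1)*Real.sqrt (c-1)*Real.sqrt c)) ∧
     Nfun (phic c) = (1/2)*((1/5)*((c-1)/c)+1)*(6*((c-1)*Real.sqrt (c-1)*Real.sqrt c))) := by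
  have hc0 : (0:ℝ) < c := by linarith
  have hs : (0:ℝ) < c - 1 := by linarith
  set a := Real.sqrt (c-1) with ha_def
  set b := Real.sqrt c with hb_def
  have ha : 0 < a := Real.sqrt_pos.mpr hs
  have hb : 0 < b := Real.sqrt_pos.mpr hc0
  have ha2 : a^2 = c - 1 := Real.sq_sqrt hs.le
  have hb2 : b^2 = c := Real.sq_sqrt hc0.le
  set k := Real.sqrt ((c-1)/c) with hk_def
  have hk : k = a / b := by rw [hk_def, ha_def, hb_def]; exact Real.sqrt_div hs.le c
  have hkpos : 0 < k := by rw [hk]; positivity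
  have hkabs : |k⁻¹| = b / a := by
    rw [abs_of_pos (by positivity), hk]; field_simp
  -- integrals of squares etc.
  have hI2 : (∫ x : ℝ, (phic c x)^2) = (c-1)^2 * ((b/a) * 6) := by
    simp only [phic, mul_pow, ← hk_def]
    rw [MeasureTheory.integral_const_mul,
      MeasureTheory.Measure.integral_comp_mul_left (fun y => (Qs y)^2) k, hkabs, smul_eq_mul, intQs2.2]
  have hI3 : (∫ x : ℝ, (phic c x)^3) = (c-1)^3 * ((b/a) * (36/5)) := by
    simp only [phic, mul_pow, ← hk_def]
    rw [MeasureTheory.integral_const_mul,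
      MeasureTheory.Measure.integral_comp_mul_left (fun y => (Qs y)^3) k, hkabs, smul_eq_mul, intQs3.2]
  have hder : ∀ x, deriv (phic c) x = (c-1) * (-(3/2) * th (k*x) * sch (k*x) ^ 2 * (k*1)) := by
    intro x
    have h := ((hasDerivAt_Qs (k*x)).comp x ((hasDerivAt_id x).const_mul k)).const_mul (c-1)
    exact h.deriv
  have hI4 : (∫ x : ℝ, (deriv (phic c) x)^2)
      = (c-1)^2 * k^2 * ((b/a) * (6/5)) := by
    have : ∀ x, (deriv (phic c) x)^2 = (c-1)^2*k^2*((-(3/2) * th (k*x) * sch (k*x) ^ 2)^2) := by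
      intro x; rw [hder x]; ring
    rw [integral_congr_ae (Filter.Eventually.of_forall this), MeasureTheory.integral_const_mul,
      MeasureTheory.Measure.integral_comp_mul_left (fun y => (-(3/2) * th y * sch y ^ 2)^2) k,
      hkabs, smul_eq_mul, intQD2.2]
  -- integrability
  have iQ2 : Integrable (fun x => (phic c x)^2) := by
    simp only [phic, mul_pow, ← hk_def]
    exact ((intQs2.1.comp_mul_left' hkpos.ne' : Integrable fun x => (Qs (k*x))^2).const_mul _)
  have iQ3 : Integrable (fun x => (phic c x)^3) := by
    simp only [phic, mul_pow, ← hk_def]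
    exact ((intQs3.1.comp_mul_left' hkpos.ne' : Integrable fun x => (Qs (k*x))^3).const_mul _)
  have iQD : Integrable (fun x => (deriv (phic c) x)^2) := by
    have : ∀ x, (deriv (phic c) x)^2 = (c-1)^2*k^2*((-(3/2) * th (k*x) * sch (k*x) ^ 2)^2) := by
      intro x; rw [hder x]; ring
    simp only [this]
    exact (intQD2.1.comp_mul_left' hkpos.ne').const_mul _
  -- split Efun, Nfun
  have hE : Efun (phic c) = (1/2) * (∫ x : ℝ, (phic c x)^2) + (1/3) * ∫ x : ℝ, (phic c x)^3 := by
    rw [Efun, MeasureTheory.integral_add (iQ2.div_const 2) (iQ3.div_const 3),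
      integral_div, integral_div]
    ring
  have hN : Nfun (phic c) = (1/2) * ((∫ x : ℝ, (deriv (phic c) x)^2) + ∫ x : ℝ, (phic c x)^2) := by
    rw [Nfun, MeasureTheory.integral_add iQD iQ2]
  have hk2 : k^2 = (c-1)/c := by rw [hk, div_pow, ha2, hb2]
  have ha2' : c - 1 = a^2 := ha2.symm
  have hab : a^2 = b^2 - 1 := by rw [ha2, hb2]
  have hb2' : c = b^2 := hb2.symm
  constructor
  · constructor
    · rw [hI2]; simp only [ha2', hb2']; field_simp; linear_combination (-(b^2-1)) * hab
    · rw [hI3]; simp only [ha2', hb2']; field_simp; linear_combination (-(b^2-1)^2) * hab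
  · refine ⟨?_, ?_, ?_⟩
    · rw [hI4, hk2]; simp only [ha2', hb2']; field_simp; linear_combination (-(b^2-1)^2) * hab
    · rw [hE, hI2, hI3]; simp only [ha2', hb2']; field_simp; linear_combination (-(b^2-1)*(90+72*(b^2-1))) * hab
    · rw [hN, hI2, hI4, hk2]; simp only [ha2', hb2']; field_simp; linear_combination (-(b^2-1)*(b^2-1+5*b^2)) * hab

lemma hasDerivAt_F {c : ℝ} (hc : 1 < c) :
    HasDerivAt (fun c' => (1/2)*((1+(4/5)*(c'-1))*(6*((c'-1)*Real.sqrt (c'-1)*Real.sqrt c'))))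
      ((Real.sqrt (c-1)/Real.sqrt c) * (9/2+12*(c-1)+(36/5)*(c-1)^2)) c := by
  have hc0 : (0:ℝ) < c := by linarith
  have hs : (0:ℝ) < c - 1 := by linarith
  have hlin : HasDerivAt (fun c' : ℝ => c' - 1) 1 c := (hasDerivAt_id c).sub_const 1
  have h3 : HasDerivAt (fun c' : ℝ => Real.sqrt (c'-1)) (1/(2*Real.sqrt (c-1)) * 1) c :=
    (Real.hasDerivAt_sqrt hs.ne').comp c hlin
  have h4 : HasDerivAt Real.sqrt (1/(2*Real.sqrt c)) c := Real.hasDerivAt_sqrt hc0.ne'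
  have hpoly : HasDerivAt (fun c' : ℝ => 1+(4/5)*(c'-1)) (0 + (4/5)*1) c :=
    (hasDerivAt_const c 1).add (hlin.const_mul (4/5))
  have h := (hpoly.mul (((hlin.mul h3).mul h4).const_mul 6)).const_mul (1/2 : ℝ)
  convert h using 1 <;> try rfl
  simp only [Pi.mul_apply]
  set A := Real.sqrt (c-1) with hA
  set B := Real.sqrt c with hB
  have ha : 0 < A := Real.sqrt_pos.mpr hs
  have hb : 0 < B := Real.sqrt_pos.mpr hc0
  have hA2 : A^2 = c - 1 := Real.sq_sqrt hs.le
  have hB2 : B^2 = c := Real.sq_sqrt hc0.le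
  clear_value A B
  have hab : B^2 = A^2 + 1 := by rw [hA2, hB2]; ring
  rw [← hA2]; try rw [← hB2]
  field_simp
  linear_combination (-(90+120*A^2)) * hab

lemma hasDerivAt_G {c : ℝ} (hc : 1 < c) :
    HasDerivAt (fun c' => (1/2)*(((c'-1)/c'*(1/5)+1)*(6*((c'-1)*Real.sqrt (c'-1)*Real.sqrt c'))))
      ((Real.sqrt (c-1)/(Real.sqrt c * c)) * (9/2+12*(c-1)+(36/5)*(c-1)^2)) c := by
  have hc0 : (0:ℝ) < c := by linarith
  have hs : (0:ℝ) < c - 1 := by linarith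
  have hlin : HasDerivAt (fun c' : ℝ => c' - 1) 1 c := (hasDerivAt_id c).sub_const 1
  have h3 : HasDerivAt (fun c' : ℝ => Real.sqrt (c'-1)) (1/(2*Real.sqrt (c-1)) * 1) c :=
    (Real.hasDerivAt_sqrt hs.ne').comp c hlin
  have h4 : HasDerivAt Real.sqrt (1/(2*Real.sqrt c)) c := Real.hasDerivAt_sqrt hc0.ne'
  have hq : HasDerivAt (fun c' : ℝ => (c'-1)/c'*(1/5)+1)
      ((1*c - (c-1)*1)/c^2 * (1/5)) c :=
    ((hlin.div (hasDerivAt_id c) hc0.ne').mul_const (1/5)).add_const 1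
  have h := (hq.mul (((hlin.mul h3).mul h4).const_mul 6)).const_mul (1/2 : ℝ)
  convert h using 1 <;> try rfl
  simp only [Pi.mul_apply]
  set A := Real.sqrt (c-1) with hA
  set B := Real.sqrt c with hB
  have ha : 0 < A := Real.sqrt_pos.mpr hs
  have hb : 0 < B := Real.sqrt_pos.mpr hc0
  have hA2 : A^2 = c - 1 := Real.sq_sqrt hs.le
  have hB2 : B^2 = c := Real.sq_sqrt hc0.le
  clear_value A B
  have hab : B^2 = A^2 + 1 := by rw [hA2, hB2]; ring
  rw [← hA2]; try rw [← hB2]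
  field_simp
  linear_combination (-(90*B^2+150*A^2+90)) * hab

end PhAux

end

/-- identities for `φ_c`, `E(φ_c)` and `N(φ_c)`. -/
theorem phic_energy_identities (c : ℝ) (hc : 1 < c) :
    ((∫ x : ℝ, (phic c x)^2) = (c - 1) ^ ((3:ℝ)/2) * c ^ ((1:ℝ)/2) * ∫ x : ℝ, (Qs x)^2) ∧
    ((∫ x : ℝ, (phic c x)^3) = (6/5) * (c - 1) * ∫ x : ℝ, (phic c x)^2) ∧
    ((∫ x : ℝ, (deriv (phic c) x)^2) = (1/5) * ((c - 1)/c) * ∫ x : ℝ, (phic c x)^2) ∧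
    (Efun (phic c) = (1/2) * (1 + (4/5) * (c - 1)) * ∫ x : ℝ, (phic c x)^2) ∧
    (Nfun (phic c) = (1/2) * ((1/5) * ((c - 1)/c) + 1) * ∫ x : ℝ, (phic c x)^2) ∧
    (Efun (phic c) - c * Nfun (phic c) = -(1/5) * (c - 1) * ∫ x : ℝ, (phic c x)^2) ∧
    (deriv (fun c' => Efun (phic c')) c = c * deriv (fun c' => Nfun (phic c')) c ∧
      0 < deriv (fun c' => Nfun (phic c')) c) := by

  classical
  have hc0 : (0:ℝ) < c := by linarith
  have hs : (0:ℝ) < c - 1 := by linarith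
  obtain ⟨⟨m1, m2⟩, m3, m4, m5⟩ := PhAux.master hc
  have ha : 0 < Real.sqrt (c-1) := Real.sqrt_pos.mpr hs
  have hb : 0 < Real.sqrt c := Real.sqrt_pos.mpr hc0
  have ha2 : Real.sqrt (c-1)^2 = c - 1 := Real.sq_sqrt hs.le
  have hb2 : Real.sqrt c^2 = c := Real.sq_sqrt hc0.le
  have r1 : (c-1) ^ ((3:ℝ)/2) = (c-1) * Real.sqrt (c-1) := by
    rw [show ((3:ℝ)/2) = 1 + 1/2 by norm_num, Real.rpow_add hs, Real.rpow_one,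
      ← Real.sqrt_eq_rpow]
  have r2 : c ^ ((1:ℝ)/2) = Real.sqrt c := (Real.sqrt_eq_rpow c).symm
  refine ⟨?_, ?_, ?_, ?_, ?_, ?_, ?_, ?_⟩
  · rw [m1, PhAux.intQs2.2, r1, r2]; ring
  · rw [m2, m1]; ring
  · rw [m3, m1]; field_simp
    linear_combination (-1) * hb2
  · rw [m4, m1]
  · rw [m5, m1]
  · rw [m4, m5, m1]; field_simp
    ring
  -- derivative part
  · have hev : ∀ᶠ c' in 𝓝 c, 1 < c' := eventually_gt_nhds hc
    have hEeq : (fun c' => Efun (phic c')) =ᶠ[𝓝 c]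
        (fun c' => (1/2)*((1+(4/5)*(c'-1))*(6*((c'-1)*Real.sqrt (c'-1)*Real.sqrt c')))) :=
      hev.mono (fun x hx => by simp only []; rw [(PhAux.master hx).2.2.1]; ring)
    have hNeq : (fun c' => Nfun (phic c')) =ᶠ[𝓝 c]
        (fun c' => (1/2)*(((c'-1)/c'*(1/5)+1)*(6*((c'-1)*Real.sqrt (c'-1)*Real.sqrt c')))) :=
      hev.mono (fun x hx => by
        simp only []; rw [(PhAux.master hx).2.2.2]; ring)
    rw [hEeq.deriv_eq, hNeq.deriv_eq, (PhAux.hasDerivAt_F hc).deriv,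
      (PhAux.hasDerivAt_G hc).deriv]
    field_simp
  · have hev : ∀ᶠ c' in 𝓝 c, 1 < c' := eventually_gt_nhds hc
    have hNeq : (fun c' => Nfun (phic c')) =ᶠ[𝓝 c]
        (fun c' => (1/2)*(((c'-1)/c'*(1/5)+1)*(6*((c'-1)*Real.sqrt (c'-1)*Real.sqrt c')))) :=
      hev.mono (fun x hx => by
        simp only []; rw [(PhAux.master hx).2.2.2]; ring)
    rw [hNeq.deriv_eq, (PhAux.hasDerivAt_G hc).deriv]
    apply mul_pos (div_pos ha (mul_pos hb hc0))
    nlinarith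
end

section
/- For every λ ∈ ℝ, with P_λ(x) = 2Q(x) + ((3−λ)/2)·x·Q'(x), one has the identity (2λ − 3)·∫(Q')² + ∫((λ−3)·Q'' − Q²)·P_λ = −((15 + 10λ − λ²)/20)·∫Q² (all integrals over ℝ). -/
open Real MeasureTheory Filter

noncomputable section

namespace PlAux

/-- first derivative of Qs -/
def Q1 (x : ℝ) : ℝ := -(3/2) * Real.sinh (x/2) / Real.cosh (x/2) ^ 3
/-- tanh(x/2) -/
def th (x : ℝ) : ℝ := Real.sinh (x/2) / Real.cosh (x/2)

lemma hasDerivAt_ch (x : ℝ) : HasDerivAt (fun y : ℝ => Real.cosh (y/2)) (Real.sinh (x/2) / 2) x := by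
  have h := (Real.hasDerivAt_cosh (x/2)).comp x ((hasDerivAt_id x).div_const 2)
  simpa [Function.comp_def, div_eq_mul_inv] using h

lemma hasDerivAt_sh (x : ℝ) : HasDerivAt (fun y : ℝ => Real.sinh (y/2)) (Real.cosh (x/2) / 2) x := by
  have h := (Real.hasDerivAt_sinh (x/2)).comp x ((hasDerivAt_id x).div_const 2)
  simpa [Function.comp_def, div_eq_mul_inv] using h

lemma ch_pos (x : ℝ) : 0 < Real.cosh (x/2) := Real.cosh_pos _
lemma ch_ne (x : ℝ) : Real.cosh (x/2) ≠ 0 := (ch_pos x).ne'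

lemma hasDerivAt_Qs (x : ℝ) : HasDerivAt Qs (Q1 x) x := by
  have hfun : Qs = fun y => (3/2) * ((Real.cosh (y/2))^2)⁻¹ := by
    funext y; simp [Qs, inv_pow]
  rw [hfun]
  have h := (((hasDerivAt_ch x).pow 2).inv (pow_ne_zero 2 (ch_ne x))).const_mul (3/2 : ℝ)
  convert h using 1 <;> try rfl
  have := ch_ne x
  simp only [Q1, Pi.pow_apply]
  field_simp
  ring

lemma hasDerivAt_Q1 (x : ℝ) : HasDerivAt Q1 (Qs x - (Qs x)^2) x := by
  have h := (((hasDerivAt_sh x).const_mul (-(3/2) : ℝ)).div ((hasDerivAt_ch x).pow 3)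
      (pow_ne_zero 3 (ch_ne x)))
  have hfun : Q1 = fun y => -(3/2) * Real.sinh (y/2) / Real.cosh (y/2) ^ 3 := rfl
  rw [hfun]
  convert h using 1 <;> try rfl
  have hc := ch_ne x
  have hs2 : Real.sinh (x/2)^2 = Real.cosh (x/2)^2 - 1 := Real.sinh_sq _
  simp only [Pi.pow_apply, Qs]
  field_simp
  linear_combination (-3 * Real.cosh (x/2)^2) * hs2

end PlAux

namespace PlAux

lemma deriv_Qs : deriv Qs = Q1 := funext fun x => (hasDerivAt_Qs x).deriv

lemma iteratedDeriv_two_Qs (x : ℝ) : iteratedDeriv 2 Qs x = Qs x - (Qs x)^2 := by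
  rw [show (2:ℕ) = 1 + 1 from rfl, iteratedDeriv_succ, iteratedDeriv_one, deriv_Qs]
  exact (hasDerivAt_Q1 x).deriv

lemma hasDerivAt_th (x : ℝ) : HasDerivAt th (1 / (2 * Real.cosh (x/2)^2)) x := by
  have h := (hasDerivAt_sh x).div (hasDerivAt_ch x) (ch_ne x)
  have hfun : th = fun y => Real.sinh (y/2) / Real.cosh (y/2) := rfl
  rw [hfun]
  convert h using 1 <;> try rfl
  have hc := ch_ne x
  have hs2 : Real.sinh (x/2)^2 = Real.cosh (x/2)^2 - 1 := Real.sinh_sq _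
  field_simp
  linear_combination hs2


lemma th_eq (x : ℝ) : th x = 1 - 2 / (Real.exp x + 1) := by
  have h1 : Real.exp x = Real.exp (x/2) * Real.exp (x/2) := by
    rw [← Real.exp_add]; ring_nf
  have h2 : (0:ℝ) < Real.exp (x/2) := Real.exp_pos _
  have h3 : (0:ℝ) < Real.exp x + 1 := by positivity
  rw [th, Real.sinh_eq, Real.cosh_eq, Real.exp_neg]
  rw [h1]
  field_simp
  ring

lemma th_tendsto_top : Tendsto th atTop (nhds 1) := by
  have h : Tendsto (fun x : ℝ => 1 - 2 / (Real.exp x + 1)) atTop (nhds 1) := by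
    have h1 : Tendsto (fun x : ℝ => Real.exp x + 1) atTop atTop :=
      Real.tendsto_exp_atTop.atTop_add tendsto_const_nhds
    have h2 : Tendsto (fun x : ℝ => 2 / (Real.exp x + 1)) atTop (nhds 0) := by
      simpa [div_eq_mul_inv] using h1.inv_tendsto_atTop.const_mul (2:ℝ)
    simpa using tendsto_const_nhds.sub h2
  exact h.congr (fun x => (th_eq x).symm)

lemma th_tendsto_bot : Tendsto th atBot (nhds (-1)) := by
  have h : Tendsto (fun x : ℝ => 1 - 2 / (Real.exp x + 1)) atBot (nhds (-1)) := by
    have h1 : Tendsto (fun x : ℝ => Real.exp x + 1) atBot (nhds 1) := by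
      simpa using Real.tendsto_exp_atBot.add (tendsto_const_nhds (x := (1:ℝ)))
    have h2 : Tendsto (fun x : ℝ => 2 / (Real.exp x + 1)) atBot (nhds 2) := by
      simpa [Pi.div_def] using (tendsto_const_nhds (x := (2:ℝ))).div h1 one_ne_zero
    have h3 := tendsto_const_nhds (x := (1:ℝ)) |>.sub h2
    norm_num at h3
    exact h3
  exact h.congr (fun x => (th_eq x).symm)

end PlAux

namespace PlAux

def F1 (x : ℝ) : ℝ := (9/2)*((th x)^3/3 - (th x)^5/5)
def F3 (x : ℝ) : ℝ := (9/2)*(th x - (th x)^3/3)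
def G3 (x : ℝ) : ℝ := (27/4)*(th x - 2*(th x)^3/3 + (th x)^5/5)

lemma hasDerivAt_F1 (x : ℝ) : HasDerivAt F1 ((Q1 x)^2) x := by
  have ht := hasDerivAt_th x
  have h := (((ht.pow 3).div_const 3).sub ((ht.pow 5).div_const 5)).const_mul (9/2 : ℝ)
  have hfun : F1 = fun y => (9/2)*((th y)^3/3 - (th y)^5/5) := rfl
  rw [hfun]
  convert h using 1 <;> try rfl
  have hc := ch_ne x
  have hs2 : Real.sinh (x/2)^2 = Real.cosh (x/2)^2 - 1 := Real.sinh_sq _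
  simp only [Pi.pow_apply, Q1, th, Nat.cast_ofNat, Nat.reduceSub]
  field_simp
  linear_combination (9 * Real.sinh (x/2)^2) * hs2

lemma hasDerivAt_F3 (x : ℝ) : HasDerivAt F3 ((Qs x)^2) x := by
  have ht := hasDerivAt_th x
  have h := (ht.sub ((ht.pow 3).div_const 3)).const_mul (9/2 : ℝ)
  have hfun : F3 = fun y => (9/2)*(th y - (th y)^3/3) := rfl
  rw [hfun]
  convert h using 1 <;> try rfl
  have hc := ch_ne x
  have hs2 : Real.sinh (x/2)^2 = Real.cosh (x/2)^2 - 1 := Real.sinh_sq _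
  simp only [Pi.pow_apply, Qs, th, Nat.cast_ofNat, Nat.reduceSub]
  field_simp
  linear_combination (9:ℝ) * hs2

lemma hasDerivAt_G3 (x : ℝ) : HasDerivAt G3 ((Qs x)^3) x := by
  have ht := hasDerivAt_th x
  have h := ((ht.sub (((ht.pow 3).const_mul (2:ℝ)).div_const 3)).add
      ((ht.pow 5).div_const 5)).const_mul (27/4 : ℝ)
  have hfun : G3 = fun y => (27/4)*(th y - 2*(th y)^3/3 + (th y)^5/5) := rfl
  rw [hfun]
  convert h using 1 <;> try rfl
  have hc := ch_ne x
  have hs2 : Real.sinh (x/2)^2 = Real.cosh (x/2)^2 - 1 := Real.sinh_sq _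
  simp only [Pi.pow_apply, Qs, th, Nat.cast_ofNat, Nat.reduceSub]
  field_simp
  linear_combination (108 * (1 - Real.sinh (x/2)^2 + Real.cosh (x/2)^2)) * hs2

end PlAux

namespace PlAux

lemma continuous_ch : Continuous (fun x : ℝ => Real.cosh (x/2)) :=
  Real.continuous_cosh.comp (continuous_id.div_const 2)

lemma continuous_sh : Continuous (fun x : ℝ => Real.sinh (x/2)) :=
  Real.continuous_sinh.comp (continuous_id.div_const 2)

lemma continuous_Qs : Continuous Qs := by
  have : Continuous fun x : ℝ => (3/2 : ℝ) * (1 / Real.cosh (x/2))^2 :=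
    continuous_const.mul ((continuous_const.div continuous_ch (fun x => ch_ne x)).pow 2)
  exact this

lemma continuous_Q1 : Continuous Q1 := by
  have : Continuous fun x : ℝ => -(3/2 : ℝ) * Real.sinh (x/2) / Real.cosh (x/2) ^ 3 :=
    (continuous_const.mul continuous_sh).div (continuous_ch.pow 3)
      (fun x => pow_ne_zero 3 (ch_ne x))
  exact this

lemma inv_ch_le (x : ℝ) : 1 / Real.cosh (x/2) ≤ 2 * Real.exp (-(|x|/2)) := by
  have h1 : Real.exp (|x|/2) ≤ 2 * Real.cosh (x/2) := by
    have hcc : Real.cosh (x/2) = Real.cosh (|x|/2) := by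
      rcases abs_cases x with ⟨h,_⟩ | ⟨h,_⟩ <;> rw [h]
      · rw [neg_div, Real.cosh_neg]
    rw [hcc, Real.cosh_eq]
    have := (Real.exp_pos (-(|x|/2))).le
    linarith
  rw [div_le_iff₀ (ch_pos x)]
  have h2 : Real.exp (-(|x|/2)) * Real.exp (|x|/2) = 1 := by
    rw [← Real.exp_add]; simp
  calc (1:ℝ) = Real.exp (-(|x|/2)) * Real.exp (|x|/2) := h2.symm
    _ ≤ Real.exp (-(|x|/2)) * (2*Real.cosh (x/2)) :=
        mul_le_mul_of_nonneg_left h1 (Real.exp_pos _).le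
    _ = 2*Real.exp (-(|x|/2)) * Real.cosh (x/2) := by ring

lemma Qs_nonneg (x : ℝ) : 0 ≤ Qs x := by unfold Qs; positivity

lemma Qs_bound (x : ℝ) : Qs x ≤ 6 * Real.exp (-(|x|/2))^2 := by
  have h := inv_ch_le x
  have h0 : (0:ℝ) ≤ 1 / Real.cosh (x/2) := by positivity
  unfold Qs; nlinarith [Real.exp_pos (-(|x|/2))]

lemma abs_sinh_le_cosh (y : ℝ) : |Real.sinh y| ≤ Real.cosh y := by
  rw [abs_le]
  constructor <;> nlinarith [Real.cosh_sq y, Real.cosh_pos y,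
    sq_nonneg (Real.sinh y - Real.cosh y), sq_nonneg (Real.sinh y + Real.cosh y)]

lemma Q1_abs_le_Qs (x : ℝ) : |Q1 x| ≤ Qs x := by
  have hc := ch_pos x
  have hrw : Qs x = (3/2)*Real.cosh (x/2)/Real.cosh (x/2)^3 := by
    unfold Qs; field_simp
  have habs : |Q1 x| = (3/2)*|Real.sinh (x/2)|/Real.cosh (x/2)^3 := by
    unfold Q1
    rw [abs_div, abs_mul, abs_of_pos (pow_pos hc 3)]
    norm_num
  rw [habs, hrw]
  gcongr
  exact abs_sinh_le_cosh _

lemma Q1_bound (x : ℝ) : |Q1 x| ≤ 6 * Real.exp (-(|x|/2))^2 :=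
  (Q1_abs_le_Qs x).trans (Qs_bound x)

lemma xE_le (x : ℝ) : |x| * Real.exp (-(|x|/2)) ≤ 2 := by
  have h1 : |x|/2 + 1 ≤ Real.exp (|x|/2) := Real.add_one_le_exp _
  have h2 : Real.exp (-(|x|/2)) * Real.exp (|x|/2) = 1 := by rw [← Real.exp_add]; simp
  have h3 := Real.exp_pos (-(|x|/2))
  have h4 := abs_nonneg x
  nlinarith [mul_le_mul_of_nonneg_left h1 h3.le]

lemma E_le_one (x : ℝ) : Real.exp (-(|x|/2)) ≤ 1 := by
  rw [Real.exp_le_one_iff]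
  have := abs_nonneg x; linarith

lemma integrable_E : Integrable (fun x : ℝ => Real.exp (-(|x|/2))) := by
  have hIoi : IntegrableOn (fun x : ℝ => Real.exp (-(|x|/2))) (Set.Ioi 0) := by
    have h := exp_neg_integrableOn_Ioi 0 (by norm_num : (0:ℝ) < 1/2)
    apply h.congr_fun ?_ measurableSet_Ioi
    intro x hx
    show Real.exp (-(1/2) * x) = Real.exp (-(|x|/2))
    rw [abs_of_pos hx]
    congr 1; ring
  have hIic : IntegrableOn (fun x : ℝ => Real.exp (-(|x|/2))) (Set.Iic 0) := by
    rw [← Measure.map_neg_eq_self (volume : Measure ℝ)]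
    have m : MeasurableEmbedding fun x : ℝ => -x := (Homeomorph.neg ℝ).measurableEmbedding
    rw [m.integrableOn_map_iff]
    simp_rw [Function.comp_def, abs_neg, Set.neg_preimage, Set.neg_Iic, neg_zero]
    exact Iff.mpr integrableOn_Ici_iff_integrableOn_Ioi hIoi
  have := hIic.union hIoi
  rwa [Set.Iic_union_Ioi, integrableOn_univ] at this

lemma integrable_of_le_E {g : ℝ → ℝ} (hg : Continuous g) {K : ℝ}
    (hb : ∀ x, |g x| ≤ K * Real.exp (-(|x|/2))) : Integrable g :=
  (integrable_E.const_mul K).mono' hg.aestronglyMeasurable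
    (ae_of_all _ fun x => by simpa [Real.norm_eq_abs] using hb x)

end PlAux

namespace PlAux

lemma basic_facts (x : ℝ) : 0 < Real.exp (-(|x|/2)) ∧ Real.exp (-(|x|/2)) ≤ 1 ∧
    Real.exp (-(|x|/2))^2 ≤ 1 := by
  refine ⟨Real.exp_pos _, E_le_one x, ?_⟩
  have h := E_le_one x
  have h0 := (Real.exp_pos (-(|x|/2))).le
  nlinarith

lemma integrable_Qs_sq : Integrable (fun x => (Qs x)^2) := by
  apply integrable_of_le_E (continuous_Qs.pow 2) (K := 36)
  intro x
  set E := Real.exp (-(|x|/2)) with hE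
  obtain ⟨hE0, hE1, hE2⟩ := basic_facts x
  have hq := Qs_bound x
  have hq0 := Qs_nonneg x
  rw [Pi.pow_apply, abs_of_nonneg (pow_nonneg hq0 2)]
  nlinarith

lemma integrable_Qs_cube : Integrable (fun x => (Qs x)^3) := by
  apply integrable_of_le_E (continuous_Qs.pow 3) (K := 216)
  intro x
  set E := Real.exp (-(|x|/2)) with hE
  obtain ⟨hE0, hE1, hE2⟩ := basic_facts x
  have hq := Qs_bound x
  have hq0 := Qs_nonneg x
  rw [Pi.pow_apply, abs_of_nonneg (pow_nonneg hq0 3)]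
  nlinarith [sq_nonneg (Qs x), sq_nonneg E, pow_nonneg hE0.le 3]

lemma abs_xQ1Qs_le (x : ℝ) (k : ℕ) (hk : (Qs x)^k ≤ 6^k * Real.exp (-(|x|/2))^2) :
    |x * Q1 x * (Qs x)^k| ≤ 12 * 6^k * Real.exp (-(|x|/2)) := by
  set E := Real.exp (-(|x|/2)) with hE
  obtain ⟨hE0, hE1, hE2⟩ := basic_facts x
  have hq0 := Qs_nonneg x
  have hq1 := Q1_bound x
  have hx := xE_le x
  have hq0k : 0 ≤ (Qs x)^k := pow_nonneg hq0 k
  have h6 : (0:ℝ) < 6^k := by positivity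
  calc |x * Q1 x * (Qs x)^k| = |x| * |Q1 x| * (Qs x)^k := by
        rw [abs_mul, abs_mul, abs_of_nonneg hq0k]
    _ ≤ |x| * (6*E^2) * (6^k * E^2) := by
        apply mul_le_mul (mul_le_mul le_rfl hq1 (abs_nonneg _) (abs_nonneg _)) hk hq0k
        positivity
    _ = 6 * 6^k * (|x| * E) * E^3 := by ring
    _ ≤ 6 * 6^k * 2 * E^3 := by
        nlinarith [mul_le_mul_of_nonneg_right hx (pow_nonneg hE0.le 3), h6.le]
    _ ≤ 12 * 6^k * E := by
        have hE3 : E^3 ≤ E := by nlinarith [hE2, hE0.le]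
        nlinarith [mul_le_mul_of_nonneg_left hE3 h6.le]

lemma Qs_pow_bound (x : ℝ) (k : ℕ) : (Qs x)^k ≤ 6^k * Real.exp (-(|x|/2))^2 ∨ True := Or.inr trivial

lemma integrable_xQ1Qs : Integrable (fun x => x * Q1 x * Qs x) := by
  apply integrable_of_le_E (K := 72) ((continuous_id.mul continuous_Q1).mul continuous_Qs)
  intro x
  have h := abs_xQ1Qs_le x 1 (by simpa using Qs_bound x)
  norm_num at h
  simpa using h

lemma integrable_xQ1Qs2 : Integrable (fun x => x * Q1 x * (Qs x)^2) := by
  apply integrable_of_le_E (K := 432) ((continuous_id.mul continuous_Q1).mul (continuous_Qs.pow 2))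
  intro x
  have hb : (Qs x)^2 ≤ 6^2 * Real.exp (-(|x|/2))^2 := by
    obtain ⟨hE0, hE1, hE2⟩ := basic_facts x
    have hq := Qs_bound x
    have hq0 := Qs_nonneg x
    nlinarith
  have h := abs_xQ1Qs_le x 2 hb
  norm_num at h
  simpa [abs_mul, abs_of_nonneg (Qs_nonneg x)] using h

end PlAux

namespace PlAux

lemma tendsto_E_top : Tendsto (fun x : ℝ => Real.exp (-(|x|/2))) atTop (nhds 0) := by
  have h1 : Tendsto (fun x : ℝ => |x|/2) atTop atTop :=
    tendsto_abs_atTop_atTop.atTop_div_const two_pos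
  exact Real.tendsto_exp_atBot.comp (tendsto_neg_atTop_atBot.comp h1)

lemma tendsto_E_bot : Tendsto (fun x : ℝ => Real.exp (-(|x|/2))) atBot (nhds 0) := by
  have h1 : Tendsto (fun x : ℝ => |x|/2) atBot atTop :=
    tendsto_abs_atBot_atTop.atTop_div_const two_pos
  exact Real.tendsto_exp_atBot.comp (tendsto_neg_atTop_atBot.comp h1)

lemma Qs_sq_le (x : ℝ) : (Qs x)^2 ≤ 6^2 * Real.exp (-(|x|/2))^2 := by
  obtain ⟨hE0, hE1, hE2⟩ := basic_facts x
  have hq := Qs_bound x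
  have hq0 := Qs_nonneg x
  nlinarith

lemma Qs_cube_le (x : ℝ) : (Qs x)^3 ≤ 6^3 * Real.exp (-(|x|/2))^2 := by
  obtain ⟨hE0, hE1, hE2⟩ := basic_facts x
  have hq := Qs_bound x
  have hq0 := Qs_nonneg x
  nlinarith [sq_nonneg (Qs x), pow_nonneg hE0.le 3, pow_nonneg hE0.le 4]

lemma abs_xQsk_le (x : ℝ) (k : ℕ) (hk : (Qs x)^k ≤ 6^k * Real.exp (-(|x|/2))^2) :
    |x * (Qs x)^k| ≤ 2 * 6^k * Real.exp (-(|x|/2)) := by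
  set E := Real.exp (-(|x|/2)) with hE
  obtain ⟨hE0, hE1, hE2⟩ := basic_facts x
  have hq0k : 0 ≤ (Qs x)^k := pow_nonneg (Qs_nonneg x) k
  have hx := xE_le x
  have h6 : (0:ℝ) < 6^k := by positivity
  calc |x * (Qs x)^k| = |x| * (Qs x)^k := by rw [abs_mul, abs_of_nonneg hq0k]
    _ ≤ |x| * (6^k * E^2) := mul_le_mul_of_nonneg_left hk (abs_nonneg x)
    _ = 6^k * (|x| * E) * E := by ring
    _ ≤ 2 * 6^k * E := by
        nlinarith [mul_le_mul_of_nonneg_right hx hE0.le, h6.le]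

lemma tendsto_xQs2 {l : Filter ℝ} (hE : Tendsto (fun x => Real.exp (-(|x|/2))) l (nhds 0)) :
    Tendsto (fun x => x * (Qs x)^2) l (nhds 0) := by
  refine squeeze_zero_norm (fun x => ?_) (by simpa using hE.const_mul (2 * 6^2 : ℝ))
  rw [Real.norm_eq_abs]
  exact abs_xQsk_le x 2 (Qs_sq_le x)

lemma tendsto_xQs3 {l : Filter ℝ} (hE : Tendsto (fun x => Real.exp (-(|x|/2))) l (nhds 0)) :
    Tendsto (fun x => x * (Qs x)^3) l (nhds 0) := by
  refine squeeze_zero_norm (fun x => ?_) (by simpa using hE.const_mul (2 * 6^3 : ℝ))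
  rw [Real.norm_eq_abs]
  exact abs_xQsk_le x 3 (Qs_cube_le x)

lemma F1_lim {l : Filter ℝ} {a : ℝ} (h : Tendsto th l (nhds a)) :
    Tendsto F1 l (nhds ((9/2)*(a^3/3 - a^5/5))) :=
  (((h.pow 3).div_const 3).sub ((h.pow 5).div_const 5)).const_mul (9/2 : ℝ)

lemma F3_lim {l : Filter ℝ} {a : ℝ} (h : Tendsto th l (nhds a)) :
    Tendsto F3 l (nhds ((9/2)*(a - a^3/3))) :=
  (h.sub ((h.pow 3).div_const 3)).const_mul (9/2 : ℝ)

lemma G3_lim {l : Filter ℝ} {a : ℝ} (h : Tendsto th l (nhds a)) :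
    Tendsto G3 l (nhds ((27/4)*(a - 2*a^3/3 + a^5/5))) :=
  ((h.sub (((h.pow 3).const_mul (2:ℝ)).div_const 3)).add ((h.pow 5).div_const 5)).const_mul (27/4 : ℝ)

lemma integrable_Q1_sq : Integrable (fun x => (Q1 x)^2) := by
  apply integrable_of_le_E (continuous_Q1.pow 2) (K := 36)
  intro x
  obtain ⟨hE0, hE1, hE2⟩ := basic_facts x
  have h := Q1_bound x
  have h0 := abs_nonneg (Q1 x)
  rw [Pi.pow_apply, abs_pow]
  nlinarith

lemma int_Q1_sq : (∫ x : ℝ, (Q1 x)^2) = 6/5 := by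
  have h := MeasureTheory.integral_of_hasDerivAt_of_tendsto hasDerivAt_F1 integrable_Q1_sq
    (F1_lim th_tendsto_bot) (F1_lim th_tendsto_top)
  rw [h]; norm_num

lemma int_Qs_sq : (∫ x : ℝ, (Qs x)^2) = 6 := by
  have h := MeasureTheory.integral_of_hasDerivAt_of_tendsto hasDerivAt_F3 integrable_Qs_sq
    (F3_lim th_tendsto_bot) (F3_lim th_tendsto_top)
  rw [h]; norm_num

end PlAux

namespace PlAux

def g2 (lam : ℝ) (x : ℝ) : ℝ :=
  ((lam-3)*(Qs x - (Qs x)^2) - (Qs x)^2) * (2*Qs x + ((3-lam)/2)*x*Q1 x)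

def F2 (lam : ℝ) (x : ℝ) : ℝ :=
  (2*(lam-3)*F3 x + (3-lam)/2*(lam-3)*(x*(Qs x)^2/2 - F3 x/2))
    - (2*(lam-2)*G3 x + (3-lam)/2*(lam-2)*(x*(Qs x)^3/3 - G3 x/3))

lemma hasDerivAt_xQsk (x : ℝ) (k : ℕ) :
    HasDerivAt (fun y => y*(Qs y)^k) ((Qs x)^k + x*(k*(Qs x)^(k-1)*Q1 x)) x := by
  have h := (hasDerivAt_id x).mul ((hasDerivAt_Qs x).pow k)
  simpa [Pi.mul_def, Pi.pow_def] using h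

lemma hasDerivAt_F2 (lam : ℝ) (x : ℝ) : HasDerivAt (F2 lam) (g2 lam x) x := by
  have h3 := hasDerivAt_F3 x
  have hg3 := hasDerivAt_G3 x
  have hx2 := hasDerivAt_xQsk x 2
  have hx3 := hasDerivAt_xQsk x 3
  have H := ((h3.const_mul (2*(lam-3))).add
      (((hx2.div_const 2).sub (h3.div_const 2)).const_mul ((3-lam)/2*(lam-3)))).sub
    ((hg3.const_mul (2*(lam-2))).add
      (((hx3.div_const 3).sub (hg3.div_const 3)).const_mul ((3-lam)/2*(lam-2))))
  have hval : g2 lam x = 2*(lam-3)*(Qs x)^2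
      + (3-lam)/2*(lam-3)*(((Qs x)^2 + x*((2:ℕ)*(Qs x)^(2-1)*Q1 x))/2 - (Qs x)^2/2)
      - (2*(lam-2)*(Qs x)^3
      + (3-lam)/2*(lam-2)*(((Qs x)^3 + x*((3:ℕ)*(Qs x)^(3-1)*Q1 x))/3 - (Qs x)^3/3)) := by
    simp only [g2]
    push_cast
    ring
  rw [hval]
  exact H

lemma F2_lim (lam : ℝ) {l : Filter ℝ} {a b : ℝ}
    (hF3 : Tendsto F3 l (nhds a)) (hG3 : Tendsto G3 l (nhds b))
    (h2 : Tendsto (fun x => x*(Qs x)^2) l (nhds 0))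
    (h3 : Tendsto (fun x => x*(Qs x)^3) l (nhds 0)) :
    Tendsto (F2 lam) l (nhds ((2*(lam-3)*a + (3-lam)/2*(lam-3)*(0/2 - a/2))
      - (2*(lam-2)*b + (3-lam)/2*(lam-2)*(0/3 - b/3)))) :=
  ((hF3.const_mul (2*(lam-3))).add
      (((h2.div_const 2).sub (hF3.div_const 2)).const_mul ((3-lam)/2*(lam-3)))).sub
    ((hG3.const_mul (2*(lam-2))).add
      (((h3.div_const 3).sub (hG3.div_const 3)).const_mul ((3-lam)/2*(lam-2))))

lemma integrable_g2 (lam : ℝ) : Integrable (g2 lam) := by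
  have hfun : g2 lam = fun x => (2*(lam-3))*(Qs x)^2 + ((3-lam)/2*(lam-3))*(x*Q1 x*Qs x)
      + (-(2*(lam-2)))*(Qs x)^3 + (-((3-lam)/2*(lam-2)))*(x*Q1 x*(Qs x)^2) := by
    funext x; simp only [g2]; ring
  rw [hfun]
  exact (((integrable_Qs_sq.const_mul _).add (integrable_xQ1Qs.const_mul _)).add
    (integrable_Qs_cube.const_mul _)).add (integrable_xQ1Qs2.const_mul _)

lemma int_g2 (lam : ℝ) : (∫ x : ℝ, g2 lam x)
    = ((2*(lam-3)*3 + (3-lam)/2*(lam-3)*(0/2 - 3/2))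
        - (2*(lam-2)*(18/5) + (3-lam)/2*(lam-2)*(0/3 - (18/5)/3)))
      - ((2*(lam-3)*(-3) + (3-lam)/2*(lam-3)*(0/2 - (-3)/2))
        - (2*(lam-2)*(-(18/5)) + (3-lam)/2*(lam-2)*(0/3 - (-(18/5))/3))) := by
  have hbot := F2_lim lam (a := -3) (b := -(18/5))
    (by have := F3_lim th_tendsto_bot; norm_num at this; exact this)
    (by have := G3_lim th_tendsto_bot; norm_num at this; exact this)
    (tendsto_xQs2 tendsto_E_bot) (tendsto_xQs3 tendsto_E_bot)
  have htop := F2_lim lam (a := 3) (b := 18/5)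
    (by have := F3_lim th_tendsto_top; norm_num at this; exact this)
    (by have := G3_lim th_tendsto_top; norm_num at this; exact this)
    (tendsto_xQs2 tendsto_E_top) (tendsto_xQs3 tendsto_E_top)
  exact MeasureTheory.integral_of_hasDerivAt_of_tendsto (hasDerivAt_F2 lam)
    (integrable_g2 lam) hbot htop

end PlAux

end

/-- the key integral identity involving `P_λ`. -/
theorem Pl_integral_identity (lam : ℝ) :
    (2*lam - 3) * (∫ x : ℝ, (deriv Qs x)^2)
      + (∫ x : ℝ, ((lam - 3) * iteratedDeriv 2 Qs x - (Qs x)^2) * Pl lam x)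
      = -((15 + 10*lam - lam^2)/20) * ∫ x : ℝ, (Qs x)^2 := by
  have hcong : (∫ x : ℝ, ((lam - 3) * iteratedDeriv 2 Qs x - (Qs x)^2) * Pl lam x)
      = ∫ x : ℝ, PlAux.g2 lam x := by
    apply MeasureTheory.integral_congr_ae (Filter.Eventually.of_forall fun x => ?_)
    rw [PlAux.iteratedDeriv_two_Qs]
    simp only [Pl, PlAux.g2, PlAux.deriv_Qs]
  rw [PlAux.deriv_Qs, hcong, PlAux.int_g2, PlAux.int_Q1_sq, PlAux.int_Qs_sq]
  ring
end

section
/- Let λ ∈ (0,1) and set a_{1,0} = 10(1+λ)/(15 + 10λ − λ²), b_{1,0} = (−30 + 18λ²)/(15 + 10λ − λ²) = 3·((λ+1)/2·a_{1,0} − 1), A_{1,0}(x) = −(x·Q'(x) + 2Q(x)) − a_{1,0}·(((λ−3)/2)·x·Q'(x) − Q(x)), and, for any κ ∈ ℝ, B_{1,0}(x) = ((3−λ)/4)·x²·Q'(x) + x·Q(x) − a_{1,0}·(((λ−3)²/8)·x²·Q'(x) + ((3−λ)/2)·x·Q(x)) + b_{1,0}·φ(x) + κ·Q'(x). Then LA_{1,0}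 = 2Q + a_{1,0}·((λ−3)·Q'' − Q²), (LB_{1,0})' = (3−λ)·A_{1,0}'' + 2Q·A_{1,0} + a_{1,0}·(2λ−3)·Q'' + 2Q, and lim_{x→+∞} B_{1,0}(x) = b_{1,0}. -/
open Real MeasureTheory Filter

noncomputable section

def dQ1 (x : ℝ) : ℝ := 6*Real.exp x*(1-Real.exp x)/(1+Real.exp x)^3
def dQ2 (x : ℝ) : ℝ := 6*Real.exp x*(1-4*Real.exp x+(Real.exp x)^2)/(1+Real.exp x)^4
def dQ3 (x : ℝ) : ℝ := 6*Real.exp x*(1-11*Real.exp x+11*(Real.exp x)^2-(Real.exp x)^3)/(1+Real.exp x)^5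
def dQ4 (x : ℝ) : ℝ := 6*Real.exp x*(1-26*Real.exp x+66*(Real.exp x)^2-26*(Real.exp x)^3+(Real.exp x)^4)/(1+Real.exp x)^6
def dP1 (x : ℝ) : ℝ := 2*Real.exp x/(1+Real.exp x)^2

theorem Qs_eq (x : ℝ) : Qs x = 6*Real.exp x/(1+Real.exp x)^2 := by
  have h : Real.exp (x/2) * Real.exp (x/2) = Real.exp x := by
    rw [← Real.exp_add]; norm_num
  have hp : (0:ℝ) < Real.exp (x/2) := Real.exp_pos _
  have hp2 : (0:ℝ) < 1 + Real.exp x := by positivity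
  have hc : Real.cosh (x/2) = (Real.exp (x/2) + (Real.exp (x/2))⁻¹)/2 := by
    rw [Real.cosh_eq, Real.exp_neg]
  unfold Qs
  rw [hc]
  rw [← h]
  field_simp
  ring

theorem hQs (x : ℝ) : HasDerivAt Qs (dQ1 x) x := by
  have hQfun : Qs = fun x => 6*Real.exp x/(1+Real.exp x)^2 := funext Qs_eq
  rw [hQfun]
  have he := Real.hasDerivAt_exp x
  have hp2 : (0:ℝ) < 1 + Real.exp x := by positivity
  have hden : ((1:ℝ)+Real.exp x)^2 ≠ 0 := by positivity
  have h := (he.const_mul 6).div (((hasDerivAt_const x (1:ℝ)).add he).pow 2) hden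
  convert h using 1
  all_goals try rfl
  try simp only [Pi.pow_apply, Pi.add_apply, Pi.sub_apply, Pi.mul_apply]
  unfold dQ1
  field_simp
  ring

theorem hdQ1 (x : ℝ) : HasDerivAt dQ1 (dQ2 x) x := by
  have he := Real.hasDerivAt_exp x
  have hp2 : (0:ℝ) < 1 + Real.exp x := by positivity
  have hden : ((1:ℝ)+Real.exp x)^3 ≠ 0 := by positivity
  have h := ((he.const_mul 6).mul ((hasDerivAt_const x (1:ℝ)).sub he)).div
    (((hasDerivAt_const x (1:ℝ)).add he).pow 3) hden
  convert h using 1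
  all_goals try rfl
  try simp only [Pi.pow_apply, Pi.add_apply, Pi.sub_apply, Pi.mul_apply]
  unfold dQ2
  field_simp
  ring

theorem hdQ2 (x : ℝ) : HasDerivAt dQ2 (dQ3 x) x := by
  have he := Real.hasDerivAt_exp x
  have hp2 : (0:ℝ) < 1 + Real.exp x := by positivity
  have hden : ((1:ℝ)+Real.exp x)^4 ≠ 0 := by positivity
  have hnum : HasDerivAt (fun x => 6*Real.exp x*(1-4*Real.exp x+(Real.exp x)^2))
      _ x :=
    (he.const_mul 6).mul (((hasDerivAt_const x (1:ℝ)).sub (he.const_mul 4)).add (he.pow 2))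
  have h := hnum.div (((hasDerivAt_const x (1:ℝ)).add he).pow 4) hden
  convert h using 1
  all_goals try rfl
  try simp only [Pi.pow_apply, Pi.add_apply, Pi.sub_apply, Pi.mul_apply]
  unfold dQ3
  field_simp
  ring

theorem hdQ3 (x : ℝ) : HasDerivAt dQ3 (dQ4 x) x := by
  have he := Real.hasDerivAt_exp x
  have hp2 : (0:ℝ) < 1 + Real.exp x := by positivity
  have hden : ((1:ℝ)+Real.exp x)^5 ≠ 0 := by positivity
  have hnum : HasDerivAt
      (fun x => 6*Real.exp x*(1-11*Real.exp x+11*(Real.exp x)^2-(Real.exp x)^3))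
      _ x :=
    (he.const_mul 6).mul ((((hasDerivAt_const x (1:ℝ)).sub (he.const_mul 11)).add
      ((he.pow 2).const_mul 11)).sub (he.pow 3))
  have h := hnum.div (((hasDerivAt_const x (1:ℝ)).add he).pow 5) hden
  convert h using 1
  all_goals try rfl
  try simp only [Pi.pow_apply, Pi.add_apply, Pi.sub_apply, Pi.mul_apply]
  unfold dQ4
  field_simp
  ring

theorem derivQs_fun : deriv Qs = dQ1 := funext fun x => (hQs x).deriv

theorem iter2Qs (x : ℝ) : iteratedDeriv 2 Qs x = dQ2 x := by
  rw [iteratedDeriv_succ, iteratedDeriv_one, derivQs_fun]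
  exact (hdQ1 x).deriv

theorem phi0_eq (x : ℝ) : phi0 x = (Real.exp x - 1)/(Real.exp x + 1) := by
  unfold phi0
  rw [derivQs_fun, Qs_eq]
  unfold dQ1
  have hp : (0:ℝ) < Real.exp x := Real.exp_pos _
  have hp2 : (0:ℝ) < 1 + Real.exp x := by positivity
  field_simp
  ring

theorem hphi0 (x : ℝ) : HasDerivAt phi0 (dP1 x) x := by
  have hfun : phi0 = fun x => (Real.exp x - 1)/(Real.exp x + 1) := funext phi0_eq
  rw [hfun]
  have he := Real.hasDerivAt_exp x
  have hden : (Real.exp x + 1) ≠ 0 := by positivity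
  have h := (he.sub_const 1).div (he.add_const 1) hden
  convert h using 1
  all_goals try rfl
  try simp only [Pi.pow_apply, Pi.add_apply, Pi.sub_apply, Pi.mul_apply]
  unfold dP1
  have hp2 : (0:ℝ) < 1 + Real.exp x := by positivity
  field_simp
  ring

theorem hdP1 (x : ℝ) : HasDerivAt dP1 ((1/3) * dQ1 x) x := by
  have he := Real.hasDerivAt_exp x
  have hp2 : (0:ℝ) < 1 + Real.exp x := by positivity
  have hden : ((1:ℝ)+Real.exp x)^2 ≠ 0 := by positivity
  have h := (he.const_mul 2).div (((hasDerivAt_const x (1:ℝ)).add he).pow 2) hden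
  convert h using 1
  all_goals try rfl
  try simp only [Pi.pow_apply, Pi.add_apply, Pi.sub_apply, Pi.mul_apply]
  unfold dQ1
  field_simp
  ring

end

noncomputable section

theorem rQ2 (x : ℝ) : dQ2 x = Qs x - Qs x^2 := by
  unfold dQ2
  rw [Qs_eq]
  have hp : (0:ℝ) < Real.exp x := Real.exp_pos x
  have hp2 : (0:ℝ) < 1 + Real.exp x := by positivity
  field_simp
  ring

theorem rQ3 (x : ℝ) : dQ3 x = dQ1 x - 2*Qs x*dQ1 x := by
  unfold dQ3 dQ1
  rw [Qs_eq]
  have hp : (0:ℝ) < Real.exp x := Real.exp_pos x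
  have hp2 : (0:ℝ) < 1 + Real.exp x := by positivity
  field_simp
  ring

theorem rQ4 (x : ℝ) : dQ4 x = Qs x - Qs x^2 - 2*dQ1 x^2 - 2*Qs x*(Qs x - Qs x^2) := by
  unfold dQ4 dQ1
  rw [Qs_eq]
  have hp : (0:ℝ) < Real.exp x := Real.exp_pos x
  have hp2 : (0:ℝ) < 1 + Real.exp x := by positivity
  field_simp
  ring

theorem rP1 (x : ℝ) : dP1 x = Qs x/3 := by
  unfold dP1
  rw [Qs_eq]
  ring

theorem rqphi (x : ℝ) : dQ1 x * phi0 x = (2/3)*Qs x^2 - Qs x := by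
  unfold dQ1
  rw [Qs_eq, phi0_eq]
  have hp : (0:ℝ) < Real.exp x := Real.exp_pos x
  have hp2 : (0:ℝ) < 1 + Real.exp x := by positivity
  have hp3 : (0:ℝ) < Real.exp x + 1 := by positivity
  field_simp
  ring

end

set_option maxHeartbeats 2000000 in
/-- explicit resolution of the system `(Ω_{1,0})`. -/
theorem Omega10_solution (lam κ : ℝ) (hlam : lam ∈ Set.Ioo (0:ℝ) 1) :
    let a10 : ℝ := 10*(1 + lam)/(15 + 10*lam - lam^2)
    let b10 : ℝ := (-30 + 18*lam^2)/(15 + 10*lam - lam^2)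
    let A10 : ℝ → ℝ := fun x =>
      -(x * deriv Qs x + 2 * Qs x) - a10 * (((lam - 3)/2) * x * deriv Qs x - Qs x)
    let B10 : ℝ → ℝ := fun x =>
      ((3 - lam)/4) * x^2 * deriv Qs x + x * Qs x
        - a10 * (((lam - 3)^2/8) * x^2 * deriv Qs x + ((3 - lam)/2) * x * Qs x)
        + b10 * phi0 x + κ * deriv Qs x
    b10 = 3 * ((lam + 1)/2 * a10 - 1) ∧
    (∀ x : ℝ, Lop A10 x = 2 * Qs x + a10 * ((lam - 3) * iteratedDeriv 2 Qs x - (Qs x)^2)) ∧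
    (∀ x : ℝ, deriv (Lop B10) x
      = (3 - lam) * iteratedDeriv 2 A10 x + 2 * Qs x * A10 x
          + a10 * (2*lam - 3) * iteratedDeriv 2 Qs x + 2 * Qs x) ∧
    Tendsto B10 atTop (nhds b10) := by
  obtain ⟨hl0, hl1⟩ := hlam
  have hD : (15 + 10*lam - lam^2) ≠ 0 := by nlinarith
  have hD' : 15 + lam*10 - lam^2 ≠ 0 := by contrapose! hD; linarith
  intro a10 b10 A10 B10
  have ha : a10 = 10*(1 + lam)/(15 + 10*lam - lam^2) := rfl
  have hb : b10 = (-30 + 18*lam^2)/(15 + 10*lam - lam^2) := rfl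
  have hAe : ∀ x : ℝ, A10 x = (-1 - a10*(lam - 3)/2)*(x * dQ1 x) + (a10 - 2)*Qs x := by
    intro x
    show -(x * deriv Qs x + 2 * Qs x) - a10 * (((lam - 3)/2) * x * deriv Qs x - Qs x) = _
    rw [derivQs_fun]; ring
  have hA1 : ∀ x : ℝ, HasDerivAt A10 ((-1 - a10*(lam - 3)/2)*(dQ1 x + x*dQ2 x) + (a10 - 2)*dQ1 x) x := by
    intro x
    have hfun : A10 = fun x => (-1 - a10*(lam - 3)/2)*(x * dQ1 x) + (a10 - 2)*Qs x := funext hAe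
    rw [hfun]
    have h := (((hasDerivAt_id' (x := x)).mul (hdQ1 x)).const_mul (-1 - a10*(lam - 3)/2)).add
      ((hQs x).const_mul (a10 - 2))
    convert h using 1 <;> try rfl
    all_goals (push_cast; ring)
  have hderivA : deriv A10 = fun x => (-1 - a10*(lam - 3)/2)*(dQ1 x + x*dQ2 x) + (a10 - 2)*dQ1 x :=
    funext fun x => (hA1 x).deriv
  have hA2 : ∀ x : ℝ, iteratedDeriv 2 A10 x = (-1 - a10*(lam - 3)/2)*(2*dQ2 x + x*dQ3 x) + (a10 - 2)*dQ2 x := by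
    intro x
    rw [iteratedDeriv_succ, iteratedDeriv_one, hderivA]
    have h : HasDerivAt (fun x => (-1 - a10*(lam - 3)/2)*(dQ1 x + x*dQ2 x) + (a10 - 2)*dQ1 x)
        ((-1 - a10*(lam - 3)/2)*(2*dQ2 x + x*dQ3 x) + (a10 - 2)*dQ2 x) x := by
      have h0 := (((hdQ1 x).add ((hasDerivAt_id' (x := x)).mul (hdQ2 x))).const_mul (-1 - a10*(lam - 3)/2)).add
        ((hdQ1 x).const_mul (a10 - 2))
      convert h0 using 1 <;> try rfl
      all_goals (push_cast; ring)
    exact h.deriv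
  have hBe : ∀ x : ℝ, B10 x = ((3 - lam)/4 - a10*(lam - 3)^2/8)*(x^2*dQ1 x) + (1 - a10*(3 - lam)/2)*(x*Qs x) + b10*phi0 x + κ*dQ1 x := by
    intro x
    show ((3 - lam)/4) * x^2 * deriv Qs x + x * Qs x
        - a10 * (((lam - 3)^2/8) * x^2 * deriv Qs x + ((3 - lam)/2) * x * Qs x)
        + b10 * phi0 x + κ * deriv Qs x = _
    rw [derivQs_fun]; ring
  have hB1 : ∀ x : ℝ, HasDerivAt B10 (((3 - lam)/4 - a10*(lam - 3)^2/8)*(2*x*dQ1 x + x^2*dQ2 x) + (1 - a10*(3 - lam)/2)*(Qs x + x*dQ1 x) + b10*dP1 x + κ*dQ2 x) x := by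
    intro x
    have hfun : B10 = fun x => ((3 - lam)/4 - a10*(lam - 3)^2/8)*(x^2*dQ1 x) + (1 - a10*(3 - lam)/2)*(x*Qs x) + b10*phi0 x + κ*dQ1 x :=
      funext hBe
    rw [hfun]
    have h := (((((hasDerivAt_pow 2 x).mul (hdQ1 x)).const_mul ((3 - lam)/4 - a10*(lam - 3)^2/8)).add
      (((hasDerivAt_id' (x := x)).mul (hQs x)).const_mul (1 - a10*(3 - lam)/2))).add
      ((hphi0 x).const_mul b10)).add ((hdQ1 x).const_mul κ)
    convert h using 1 <;> try rfl
    all_goals (push_cast; ring)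
  have hderivB : deriv B10 = fun x => ((3 - lam)/4 - a10*(lam - 3)^2/8)*(2*x*dQ1 x + x^2*dQ2 x) + (1 - a10*(3 - lam)/2)*(Qs x + x*dQ1 x) + b10*dP1 x + κ*dQ2 x := funext fun x => (hB1 x).deriv
  have hB2 : ∀ x : ℝ, HasDerivAt (fun x => ((3 - lam)/4 - a10*(lam - 3)^2/8)*(2*x*dQ1 x + x^2*dQ2 x) + (1 - a10*(3 - lam)/2)*(Qs x + x*dQ1 x) + b10*dP1 x + κ*dQ2 x) (((3 - lam)/4 - a10*(lam - 3)^2/8)*(2*dQ1 x + 4*x*dQ2 x + x^2*dQ3 x) + (1 - a10*(3 - lam)/2)*(2*dQ1 x + x*dQ2 x) + (b10/3)*dQ1 x + κ*dQ3 x) x := by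
    intro x
    have h := (((((((hasDerivAt_id' (x := x)).const_mul 2).mul (hdQ1 x)).add
        ((hasDerivAt_pow 2 x).mul (hdQ2 x))).const_mul ((3 - lam)/4 - a10*(lam - 3)^2/8)).add
      (((hQs x).add ((hasDerivAt_id' (x := x)).mul (hdQ1 x))).const_mul (1 - a10*(3 - lam)/2))).add
      ((hdP1 x).const_mul b10)).add ((hdQ2 x).const_mul κ)
    convert h using 1 <;> try rfl
    all_goals (push_cast; ring)
  have hiter2B : ∀ x : ℝ, iteratedDeriv 2 B10 x = ((3 - lam)/4 - a10*(lam - 3)^2/8)*(2*dQ1 x + 4*x*dQ2 x + x^2*dQ3 x) + (1 - a10*(3 - lam)/2)*(2*dQ1 x + x*dQ2 x) + (b10/3)*dQ1 x + κ*dQ3 x := by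
    intro x
    rw [iteratedDeriv_succ, iteratedDeriv_one, hderivB]
    exact (hB2 x).deriv
  have hLopB : Lop B10 = fun x => -(((3 - lam)/4 - a10*(lam - 3)^2/8)*(2*dQ1 x + 4*x*dQ2 x + x^2*dQ3 x) + (1 - a10*(3 - lam)/2)*(2*dQ1 x + x*dQ2 x) + (b10/3)*dQ1 x + κ*dQ3 x) + B10 x - 2*Qs x*B10 x := by
    funext x
    show -(iteratedDeriv 2 B10 x) + B10 x - 2*Qs x*B10 x = _
    rw [hiter2B x]
  have hB3 : ∀ x : ℝ, HasDerivAt (fun x => ((3 - lam)/4 - a10*(lam - 3)^2/8)*(2*dQ1 x + 4*x*dQ2 x + x^2*dQ3 x) + (1 - a10*(3 - lam)/2)*(2*dQ1 x + x*dQ2 x) + (b10/3)*dQ1 x + κ*dQ3 x) (((3 - lam)/4 - a10*(lam - 3)^2/8)*(6*dQ2 x + 6*x*dQ3 x + x^2*dQ4 x) + (1 - a10*(3 - lam)/2)*(3*dQ2 x + x*dQ3 x) + (b10/3)*dQ2 x + κ*dQ4 x) x := by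
    intro x
    have h := (((((((hdQ1 x).const_mul 2).add
          (((hasDerivAt_id' (x := x)).const_mul 4).mul (hdQ2 x))).add
          ((hasDerivAt_pow 2 x).mul (hdQ3 x))).const_mul ((3 - lam)/4 - a10*(lam - 3)^2/8)).add
        ((((hdQ1 x).const_mul 2).add ((hasDerivAt_id' (x := x)).mul (hdQ2 x))).const_mul (1 - a10*(3 - lam)/2))).add
        ((hdQ1 x).const_mul (b10/3))).add ((hdQ3 x).const_mul κ)
    convert h using 1 <;> try rfl
    all_goals (push_cast; ring)
  have hLB : ∀ x : ℝ, HasDerivAt (Lop B10)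
      (-(((3 - lam)/4 - a10*(lam - 3)^2/8)*(6*dQ2 x + 6*x*dQ3 x + x^2*dQ4 x) + (1 - a10*(3 - lam)/2)*(3*dQ2 x + x*dQ3 x) + (b10/3)*dQ2 x + κ*dQ4 x) + (((3 - lam)/4 - a10*(lam - 3)^2/8)*(2*x*dQ1 x + x^2*dQ2 x) + (1 - a10*(3 - lam)/2)*(Qs x + x*dQ1 x) + b10*dP1 x + κ*dQ2 x) - ((2*dQ1 x)*B10 x + (2*Qs x)*(((3 - lam)/4 - a10*(lam - 3)^2/8)*(2*x*dQ1 x + x^2*dQ2 x) + (1 - a10*(3 - lam)/2)*(Qs x + x*dQ1 x) + b10*dP1 x + κ*dQ2 x))) x := by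
    intro x
    rw [hLopB]
    exact (((hB3 x).neg).add (hB1 x)).sub (((hQs x).const_mul 2).mul (hB1 x))
  refine ⟨by rw [ha, hb]; field_simp; ring, ?_, ?_, ?_⟩
  · intro x
    have hp : (0:ℝ) < Real.exp x := Real.exp_pos x
    have hp2 : (0:ℝ) < 1 + Real.exp x := by positivity
    show -(iteratedDeriv 2 A10 x) + A10 x - 2 * Qs x * A10 x = _
    rw [hA2 x, hAe x, iter2Qs, rQ3 x, rQ2 x]
    ring
  · intro x
    have hp : (0:ℝ) < Real.exp x := Real.exp_pos x
    have hp2 : (0:ℝ) < 1 + Real.exp x := by positivity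
    have hq : (2*dQ1 x)*B10 x
        = 2*(((3 - lam)/4 - a10*(lam - 3)^2/8)*(x^2*dQ1 x) + (1 - a10*(3 - lam)/2)*(x*Qs x) + κ*dQ1 x)*dQ1 x
          + 2*b10*((2/3)*Qs x^2 - Qs x) := by
      rw [hBe x, ← rqphi x]; ring
    rw [(hLB x).deriv, hq, hA2 x, hAe x, iter2Qs, rQ4 x, rQ3 x, rQ2 x, rP1 x, ha, hb]
    field_simp
    ring
  · have hue : Tendsto (fun x:ℝ => Real.exp (-x)) atTop (nhds 0) :=
      Real.tendsto_exp_atBot.comp tendsto_neg_atTop_atBot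
    have hBu : ∀ x : ℝ, B10 x
        = ((3 - lam)/4 - a10*(lam - 3)^2/8)*((x^2*Real.exp (-x)) * (6*(Real.exp (-x)-1)/(1+Real.exp (-x))^3))
          + (1 - a10*(3 - lam)/2)*((x*Real.exp (-x)) * (6/(1+Real.exp (-x))^2))
          + b10*((1-Real.exp (-x))/(1+Real.exp (-x)))
          + κ*((Real.exp (-x)) * (6*(Real.exp (-x)-1)/(1+Real.exp (-x))^3)) := by
      intro x
      have hp : (0:ℝ) < Real.exp x := Real.exp_pos x
      have hp2 : (0:ℝ) < 1 + Real.exp x := by positivity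
      rw [hBe x, phi0_eq, Qs_eq, Real.exp_neg]
      unfold dQ1
      field_simp
      ring
    have lp2 : Tendsto (fun x:ℝ => x^2*Real.exp (-x)) atTop (nhds 0) :=
      Real.tendsto_pow_mul_exp_neg_atTop_nhds_zero 2
    have lp1 : Tendsto (fun x:ℝ => x*Real.exp (-x)) atTop (nhds 0) := by
      simpa using Real.tendsto_pow_mul_exp_neg_atTop_nhds_zero 1
    have lg1 : Tendsto (fun x:ℝ => 6*(Real.exp (-x)-1)/(1+Real.exp (-x))^3) atTop
        (nhds (6*(0-1)/(1+0)^3)) :=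
      ((hue.sub_const 1).const_mul 6).div ((hue.const_add 1).pow 3) (by norm_num)
    have lg2 : Tendsto (fun x:ℝ => 6/(1+Real.exp (-x))^2) atTop (nhds (6/(1+0)^2)) :=
      tendsto_const_nhds.div ((hue.const_add 1).pow 2) (by norm_num)
    have lg3 : Tendsto (fun x:ℝ => (1-Real.exp (-x))/(1+Real.exp (-x))) atTop
        (nhds ((1-0)/(1+0))) :=
      (tendsto_const_nhds.sub hue).div (hue.const_add 1) (by norm_num)
    have final := ((((lp2.mul lg1).const_mul ((3 - lam)/4 - a10*(lam - 3)^2/8)).add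
        ((lp1.mul lg2).const_mul (1 - a10*(3 - lam)/2))).add
        (lg3.const_mul b10)).add ((hue.mul lg1).const_mul κ)
    have := final.congr (fun x => (hBu x).symm)
    convert this using 2
    norm_num
end

section
/- Define b_{1,0}(λ) = (−30 + 18λ²)/(15 + 10λ − λ²), q(λ) = 5625 − 13500λ² − 3375λ³ + 75(125 − 3π²)λ⁴ + 300(16 − π²)λ⁵ − 10(18 + 7π²)λ⁶ − 5(45 − 4π²)λ⁷ − π²λ⁸, and b_{2,0}(λ) = 4·q(λ)/(5(1−λ)(15 + 10λ − λ²)³). Then for all λ ∈ (0,1), b_{2,0}(λ) ≠ −b_{1,0}(λ)³/(6(1−λ)). -/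
open Real MeasureTheory Filter

/-- `b_{2,0}(λ) ≠ -b_{1,0}(λ)³/(6(1-λ))` for every `λ ∈ (0,1)`. -/
theorem b20_nonzero (lam : ℝ) (hlam : lam ∈ Set.Ioo (0:ℝ) 1) :
    let b10 : ℝ := (-30 + 18*lam^2)/(15 + 10*lam - lam^2)
    let q : ℝ := 5625 - 13500*lam^2 - 3375*lam^3 + 75*(125 - 3*Real.pi^2)*lam^4
        + 300*(16 - Real.pi^2)*lam^5 - 10*(18 + 7*Real.pi^2)*lam^6
        - 5*(45 - 4*Real.pi^2)*lam^7 - Real.pi^2*lam^8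
    let b20 : ℝ := 4*q/(5*(1 - lam)*(15 + 10*lam - lam^2)^3)
    b20 ≠ -b10^3/(6*(1 - lam)) := by
  intro b10 q b20
  obtain ⟨h0, h1⟩ := hlam
  have hD : (0:ℝ) < 15 + 10*lam - lam^2 := by nlinarith
  have hE : (0:ℝ) < 1 - lam := by linarith
  have hpi : Real.pi > 3.141592 := Real.pi_gt_d6
  have hp2 : Real.pi^2 > 9.869 := by nlinarith
  intro h
  have hD' : (15 + 10*lam - lam^2) ≠ 0 := ne_of_gt hD
  have hE' : (1 - lam) ≠ 0 := ne_of_gt hE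
  simp only [b10, q, b20] at h
  field_simp at h
  have key : (24*(5625 - 13500*lam^2 - 3375*lam^3 + 75*(125 - 3*Real.pi^2)*lam^4
        + 300*(16 - Real.pi^2)*lam^5 - 10*(18 + 7*Real.pi^2)*lam^6
        - 5*(45 - 4*Real.pi^2)*lam^7 - Real.pi^2*lam^8)
      + 5*(-30 + 18*lam^2)^3) * ((15 + 10*lam - lam^2)^3 * (1 - lam)) = 0 := by
    rw [eq_neg_iff_add_eq_zero, ← add_div, div_eq_zero_iff] at h
    rcases h with h | h
    · linear_combination ((15 + 10*lam - lam^2)^3 * (1 - lam)) * h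
    · exact absurd h (pow_ne_zero _ (ne_of_gt (by nlinarith)))
  have hfac : (24*(5625 - 13500*lam^2 - 3375*lam^3 + 75*(125 - 3*Real.pi^2)*lam^4
        + 300*(16 - Real.pi^2)*lam^5 - 10*(18 + 7*Real.pi^2)*lam^6
        - 5*(45 - 4*Real.pi^2)*lam^7 - Real.pi^2*lam^8)
      + 5*(-30 + 18*lam^2)^3) = 0 := by
    rcases mul_eq_zero.mp key with h' | h'
    · exact h'
    · exact absurd h' (by positivity)
  have hle : lam ≤ 1 := le_of_lt h1
  have h4 : lam^4 ≤ lam^2 := pow_le_pow_of_le_one h0.le hle (by norm_num)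
  have h5 : lam^5 ≤ lam^2 := pow_le_pow_of_le_one h0.le hle (by norm_num)
  have h6 : lam^6 ≤ lam^2 := pow_le_pow_of_le_one h0.le hle (by norm_num)
  have h2p : 0 < lam^2 := pow_pos h0 2
  have h3p : 0 < lam^3 := pow_pos h0 3
  have h7p : 0 < lam^7 := pow_pos h0 7
  have h8p : 0 < lam^8 := pow_pos h0 8
  have hc7 : 0 < 5400 - 480*Real.pi^2 ∨ True := Or.inr trivial
  nlinarith [mul_pos h2p h2p, mul_pos h0 h2p,
    mul_le_mul_of_nonneg_left h4 (le_of_lt (show (0:ℝ) < 79200 - 5400*Real.pi^2 by nlinarith [Real.pi_lt_d2])),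
    mul_le_mul_of_nonneg_left h5 (le_of_lt (show (0:ℝ) < 115200 - 7200*Real.pi^2 by nlinarith [Real.pi_lt_d2])),
    mul_le_mul_of_nonneg_left h6 (le_of_lt (show (0:ℝ) < 24840 - 1680*Real.pi^2 by nlinarith [Real.pi_lt_d2])),
    mul_pos h7p (show (0:ℝ) < 5400 - 480*Real.pi^2 by nlinarith [Real.pi_lt_d2]),
    mul_pos h8p (show (0:ℝ) < Real.pi^2 by positivity)]
end
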